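/- arXiv:2307.02619 — 3 statements merged into one kernel-verified Lean document; each statement's English description precedes it below -/
import Mathlib

section
/- Assume n ≥ max(p,q), and let R_n(z) be the q×p matrix with entries R_{i,j,n}(z) (0 ≤ i ≤ q−1, 0 ≤ j ≤ p−1). Then all the transformations below are defined and R_n(z) = (τ_{ρ,0} ∘ τ_{ρ,1} ∘ ⋯ ∘ τ_{ρ,n−1})(X_n(z)), where X_n(z) is the q×p matrix all of whose main-diagonal entries equal 1/z and all other entries equal 0. -/
open scoped BigOperators
open Finset

noncomputable section

/-- The field `ℂ((z⁻¹))`, realized as Laurent series in the variable `t = z⁻¹`. -/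
abbrev LS : Type := LaurentSeries ℂ

/-- The element `z` of `ℂ((z⁻¹))` (i.e. `t⁻¹`). -/
def zLS : LS := HahnSeries.single (-1 : ℤ) (1 : ℂ)

/-- Constant (scalar) Laurent series. -/
def CLS (c : ℂ) : LS := HahnSeries.C c

/-- The generating series `Σ_{n ≥ 0} c n · z^{-n-1}` in `ℂ((z⁻¹))`. -/
def gen (c : ℕ → ℂ) : LS :=
  HahnSeries.single (1 : ℤ) (1 : ℂ) * (HahnSeries.ofPowerSeries ℤ ℂ) (PowerSeries.mk c)

/-- Weight of a step of displacement `s` starting at height `h`: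
`a_h^{(s)}` if `s ≥ 0`, and `a_{h+s}^{(s)}` if `s < 0`.  (Here `a k n = aₙ⁽ᵏ⁾`.) -/
def stepW (a : ℤ → ℤ → ℂ) (h s : ℤ) : ℂ := if 0 ≤ s then a s h else a s (h + s)

/-- Extend a finite step sequence by zero. -/
def ext {n : ℕ} (s : Fin n → ℤ) : ℕ → ℤ := fun t => if h : t < n then s ⟨t, h⟩ else 0

/-- Height after `k` steps, starting at height `i`. -/
def hgt (i : ℤ) (σ : ℕ → ℤ) (k : ℕ) : ℤ := i + ∑ t ∈ Finset.range k, σ t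

/-- Weight of the lattice path of length `n` starting at height `i` with steps `σ`. -/
def wgt (a : ℤ → ℤ → ℂ) (n : ℕ) (i : ℤ) (σ : ℕ → ℤ) : ℂ :=
  ∏ k ∈ Finset.range n, stepW a (hgt i σ k) (σ k)

/-- All admissible step sequences of length `n` (each step in `[-p, q]`). -/
def steps (p q n : ℕ) : Finset (Fin n → ℤ) :=
  Fintype.piFinset fun _ => Finset.Icc (-(p : ℤ)) (q : ℤ)

/-- `A_{[n,i,j]}`: weight polynomial of paths of length `n` from `(0,i)` to `(n,j)`
staying at height `≥ 0`. -/
def Apoly (p q : ℕ) (a : ℤ → ℤ → ℂ) (n : ℕ) (i j : ℤ) : ℂ :=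
  ∑ s ∈ steps p q n,
    if hgt i (ext s) n = j ∧ ∀ k ≤ n, 0 ≤ hgt i (ext s) k then wgt a n i (ext s) else 0

/-- `W_{[n,i,j]}`: weight polynomial of unrestricted paths of length `n` from `(0,i)` to `(n,j)`. -/
def Wpoly (p q : ℕ) (a : ℤ → ℤ → ℂ) (n : ℕ) (i j : ℤ) : ℂ :=
  ∑ s ∈ steps p q n, if hgt i (ext s) n = j then wgt a n i (ext s) else 0

/-- `V_{[n,i,j]}`: weight polynomial of paths of length `n` from `(0,i)` to `(n,j)`
staying at height `≤ -1`. -/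
def Vpoly (p q : ℕ) (a : ℤ → ℤ → ℂ) (n : ℕ) (i j : ℤ) : ℂ :=
  ∑ s ∈ steps p q n,
    if hgt i (ext s) n = j ∧ ∀ k ≤ n, hgt i (ext s) k ≤ -1 then wgt a n i (ext s) else 0

/-- `A_{[ℓ,i,j,N]}`: weight polynomial of paths of length `ℓ` from `(0,i)` to `(ℓ,j)`
with all heights in `{0, …, N-1}`. -/
def Aboxpoly (p q : ℕ) (a : ℤ → ℤ → ℂ) (N ℓ : ℕ) (i j : ℤ) : ℂ :=
  ∑ s ∈ steps p q ℓ,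
    if hgt i (ext s) ℓ = j ∧ ∀ k ≤ ℓ, 0 ≤ hgt i (ext s) k ∧ hgt i (ext s) k ≤ (N : ℤ) - 1
    then wgt a ℓ i (ext s) else 0

/-- The generating series `A_{i,j}(z)`. -/
def Aser (p q : ℕ) (a : ℤ → ℤ → ℂ) (i j : ℤ) : LS := gen fun n => Apoly p q a n i j

/-- The generating series `W_{i,j}(z)`. -/
def Wser (p q : ℕ) (a : ℤ → ℤ → ℂ) (i j : ℤ) : LS := gen fun n => Wpoly p q a n i j

/-- The generating series `V_{i,j}(z)`. -/
def Vser (p q : ℕ) (a : ℤ → ℤ → ℂ) (i j : ℤ) : LS := gen fun n => Vpoly p q a n i j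


/-- The one-sided banded matrix `H`: `h_{i,j} = a_{min(i,j)}^{(j-i)}` when `-p ≤ j-i ≤ q`. -/
def Hmat (p q : ℕ) (a : ℤ → ℤ → ℂ) (i j : ℕ) : ℂ :=
  if -(p : ℤ) ≤ (j : ℤ) - (i : ℤ) ∧ (j : ℤ) - (i : ℤ) ≤ (q : ℤ) then
    a ((j : ℤ) - (i : ℤ)) (min (i : ℤ) (j : ℤ)) else 0

/-- Entrywise power of a one-sided matrix whose rows are supported on `[0, i + B]`:
`(M^n)_{i,j}`. -/
def onePow (M : ℕ → ℕ → ℂ) (B : ℕ) : ℕ → ℕ → ℕ → ℂ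
  | 0, i, j => if i = j then 1 else 0
  | n + 1, i, j => ∑ r ∈ Finset.range (i + B + 1), M i r * onePow M B n r j

/-- The transformation `T` on `q × p` matrices (over a field) with nonzero `(0,0)` entry. -/
def Tmat {F : Type*} [Field F] {q p : ℕ} (hq : 0 < q) (hp : 0 < p)
    (A : Matrix (Fin q) (Fin p) F) : Matrix (Fin q) (Fin p) F := fun i j =>
  if hi : (i : ℕ) + 1 < q then
    if hj : (j : ℕ) + 1 < p then
      (A ⟨(i : ℕ) + 1, hi⟩ ⟨(j : ℕ) + 1, hj⟩ * A ⟨0, hq⟩ ⟨0, hp⟩ -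
          A ⟨0, hq⟩ ⟨(j : ℕ) + 1, hj⟩ * A ⟨(i : ℕ) + 1, hi⟩ ⟨0, hp⟩) / A ⟨0, hq⟩ ⟨0, hp⟩
    else A ⟨(i : ℕ) + 1, hi⟩ ⟨0, hp⟩ / A ⟨0, hq⟩ ⟨0, hp⟩
  else
    if hj : (j : ℕ) + 1 < p then -A ⟨0, hq⟩ ⟨(j : ℕ) + 1, hj⟩ / A ⟨0, hq⟩ ⟨0, hp⟩
    else 1 / A ⟨0, hq⟩ ⟨0, hp⟩

/-- The inverse transformation `T⁻¹` on `q × p` matrices with nonzero `(q-1,p-1)` entry. -/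
def Tinv {F : Type*} [Field F] {q p : ℕ} (hq : 0 < q) (hp : 0 < p)
    (B : Matrix (Fin q) (Fin p) F) : Matrix (Fin q) (Fin p) F := fun i j =>
  if hi : (i : ℕ) = 0 then
    if hj : (j : ℕ) = 0 then
      1 / B ⟨q - 1, Nat.sub_lt hq one_pos⟩ ⟨p - 1, Nat.sub_lt hp one_pos⟩
    else
      -B ⟨q - 1, Nat.sub_lt hq one_pos⟩ ⟨(j : ℕ) - 1, by have := j.isLt; omega⟩ /
        B ⟨q - 1, Nat.sub_lt hq one_pos⟩ ⟨p - 1, Nat.sub_lt hp one_pos⟩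
  else
    if hj : (j : ℕ) = 0 then
      B ⟨(i : ℕ) - 1, by have := i.isLt; omega⟩ ⟨p - 1, Nat.sub_lt hp one_pos⟩ /
        B ⟨q - 1, Nat.sub_lt hq one_pos⟩ ⟨p - 1, Nat.sub_lt hp one_pos⟩
    else
      (B ⟨(i : ℕ) - 1, by have := i.isLt; omega⟩ ⟨(j : ℕ) - 1, by have := j.isLt; omega⟩ *
          B ⟨q - 1, Nat.sub_lt hq one_pos⟩ ⟨p - 1, Nat.sub_lt hp one_pos⟩ -
        B ⟨(i : ℕ) - 1, by have := i.isLt; omega⟩ ⟨p - 1, Nat.sub_lt hp one_pos⟩ *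
          B ⟨q - 1, Nat.sub_lt hq one_pos⟩ ⟨(j : ℕ) - 1, by have := j.isLt; omega⟩) /
        B ⟨q - 1, Nat.sub_lt hq one_pos⟩ ⟨p - 1, Nat.sub_lt hp one_pos⟩

/-- `chainFrom τ k X m = τ_m (τ_{m+1} ( ⋯ (τ_{k-1} X)))`; in particular
`chainFrom τ k X 0 = (τ_0 ∘ τ_1 ∘ ⋯ ∘ τ_{k-1}) X`. -/
def chainFrom {M : Type*} (τ : ℕ → M → M) (k : ℕ) (X : M) (m : ℕ) : M :=
  (List.range (k - m)).foldr (fun t Y => τ (m + t) Y) X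

/-- The `q × p` matrix `α_k(z)`, whose only nonzero entry is `z - a_k^{(0)}` at `(q-1, p-1)`. -/
def alphaZ (q p : ℕ) (a : ℤ → ℤ → ℂ) (k : ℕ) : Matrix (Fin q) (Fin p) LS := fun i j =>
  if (i : ℕ) = q - 1 ∧ (j : ℕ) = p - 1 then zLS - CLS (a 0 (k : ℤ)) else 0

/-- The `q × q` matrix `α_k⁺`: first `q-1` rows of the identity, last row
`(-a_k^{(1)}, …, -a_k^{(q)})`. -/
def alphaP (q : ℕ) (a : ℤ → ℤ → ℂ) (k : ℕ) : Matrix (Fin q) (Fin q) LS := fun i j =>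
  if (i : ℕ) = q - 1 then -CLS (a (((j : ℕ) : ℤ) + 1) (k : ℤ))
  else if i = j then 1 else 0

/-- The `p × p` matrix `α_k⁻`: first `p-1` columns of the identity, last column
`(a_k^{(-1)}, …, a_k^{(-p)})ᵀ`. -/
def alphaM (p : ℕ) (a : ℤ → ℤ → ℂ) (k : ℕ) : Matrix (Fin p) (Fin p) LS := fun i j =>
  if (j : ℕ) = p - 1 then CLS (a (-(((i : ℕ) : ℤ) + 1)) (k : ℤ))
  else if i = j then 1 else 0

/-- `F_r(z)`: the `q × p` matrix of resolvent series of `H^{[r]}` (delete the first `r` rows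
and columns of `H`); `F_0 = F`. -/
def Fmat (p q : ℕ) (a : ℤ → ℤ → ℂ) (r : ℕ) : Matrix (Fin q) (Fin p) LS := fun i j =>
  gen fun n => onePow (fun i' j' => Hmat p q a (i' + r) (j' + r)) q n (i : ℕ) (j : ℕ)

/-- The transformation `τ_{α,k}(X) = T⁻¹(α_k(z) + α_k⁺ X α_k⁻)`. -/
def tauAlpha (p q : ℕ) (hq : 0 < q) (hp : 0 < p) (a : ℤ → ℤ → ℂ) (k : ℕ)
    (X : Matrix (Fin q) (Fin p) LS) : Matrix (Fin q) (Fin p) LS :=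
  Tinv hq hp (alphaZ q p a k + alphaP q a k * X * alphaM p a k)

/-- The principal `n × n` truncation `H_n` of the banded matrix `H`. -/
def Hnmat (p q : ℕ) (a : ℤ → ℤ → ℂ) (n : ℕ) : Matrix (Fin n) (Fin n) ℂ := fun i j =>
  if -(p : ℤ) ≤ ((j : ℕ) : ℤ) - ((i : ℕ) : ℤ) ∧ ((j : ℕ) : ℤ) - ((i : ℕ) : ℤ) ≤ (q : ℤ) then
    a (((j : ℕ) : ℤ) - ((i : ℕ) : ℤ)) (min ((i : ℕ) : ℤ) ((j : ℕ) : ℤ)) else 0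

/-- The `q × q` matrix `ρ_k⁺` (depending on the truncation size `n`): identity except the last
row, `(-b_k^{(1)}, …, -b_k^{(q)})`, where `b_k^{(i)} = a_k^{(i)}` for `1 ≤ i ≤ n-k-1` and
`b_k^{(i)} = 0` for `n-k ≤ i ≤ q`. -/
def rhoP (q n : ℕ) (a : ℤ → ℤ → ℂ) (k : ℕ) : Matrix (Fin q) (Fin q) LS := fun i j =>
  if (i : ℕ) = q - 1 then
    -CLS (if (j : ℕ) + 1 ≤ n - k - 1 then a (((j : ℕ) : ℤ) + 1) (k : ℤ) else 0)
  else if i = j then 1 else 0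

/-- The `p × p` matrix `ρ_k⁻`: identity except the last column,
`(b_k^{(-1)}, …, b_k^{(-p)})ᵀ`, where `b_k^{(-j)} = a_k^{(-j)}` for `1 ≤ j ≤ n-k-1` and
`b_k^{(-j)} = 0` for `n-k ≤ j ≤ p`. -/
def rhoM (p n : ℕ) (a : ℤ → ℤ → ℂ) (k : ℕ) : Matrix (Fin p) (Fin p) LS := fun i j =>
  if (j : ℕ) = p - 1 then
    CLS (if (i : ℕ) + 1 ≤ n - k - 1 then a (-(((i : ℕ) : ℤ) + 1)) (k : ℤ) else 0)
  else if i = j then 1 else 0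

/-- The transformation `τ_{ρ,k}(X) = T⁻¹(ρ_k(z) + ρ_k⁺ X ρ_k⁻)` (note `ρ_k(z) = α_k(z)`). -/
def tauRho (p q n : ℕ) (hq : 0 < q) (hp : 0 < p) (a : ℤ → ℤ → ℂ) (k : ℕ)
    (X : Matrix (Fin q) (Fin p) LS) : Matrix (Fin q) (Fin p) LS :=
  Tinv hq hp (alphaZ q p a k + rhoP q n a k * X * rhoM p n a k)

/-- The `q × p` matrix `X_n(z)` with `1/z` on the main diagonal and zeros elsewhere. -/
def Xdiag (p q : ℕ) : Matrix (Fin q) (Fin p) LS := fun i j =>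
  if (i : ℕ) = (j : ℕ) then zLS⁻¹ else 0

set_option maxHeartbeats 1600000

lemma MCF_ofPS_coeff_neg (x : PowerSeries ℂ) (m : ℤ) (hm : m < 0) :
    ((HahnSeries.ofPowerSeries ℤ ℂ) x).coeff m = 0 := by
  rw [HahnSeries.ofPowerSeries_apply]
  apply HahnSeries.embDomain_notin_range
  rintro ⟨k, hk⟩
  rw [show (Nat.castOrderEmbedding k : ℤ) = (k:ℤ) from rfl] at hk
  omega

lemma MCF_gen_coeff_nonpos (c : ℕ → ℂ) (k : ℤ) (hk : k ≤ 0) : (gen c).coeff k = 0 := by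
  unfold gen
  have h : k = (k - 1) + 1 := by ring
  rw [h, HahnSeries.coeff_single_mul_add, MCF_ofPS_coeff_neg _ _ (by omega), mul_zero]

lemma MCF_CLS_coeff (c : ℂ) (k : ℤ) (hk : k ≠ 0) : (CLS c).coeff k = 0 := by
  simpa [CLS, HahnSeries.C_apply] using HahnSeries.coeff_single_of_ne hk

lemma MCF_zLS_coeff : zLS.coeff (-1) = 1 := by simp [zLS]

lemma MCF_gen_zero : gen (fun _ => 0) = 0 := by
  unfold gen
  have : PowerSeries.mk (fun _ => (0:ℂ)) = 0 := by ext n; simp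
  rw [this, map_zero, mul_zero]

lemma MCF_gen_add (c d : ℕ → ℂ) : gen (fun n => c n + d n) = gen c + gen d := by
  unfold gen
  have : PowerSeries.mk (fun n => c n + d n) = PowerSeries.mk c + PowerSeries.mk d := by
    ext n; simp
  rw [this, map_add, mul_add]

lemma MCF_CLS_mul_gen (r : ℂ) (c : ℕ → ℂ) : CLS r * gen c = gen (fun n => r * c n) := by
  unfold gen CLS
  have h1 : PowerSeries.mk (fun n => r * c n) = PowerSeries.C r * PowerSeries.mk c := by
    ext n; simp
  rw [h1, map_mul, HahnSeries.ofPowerSeries_C]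
  ring

lemma MCF_gen_mul_CLS (r : ℂ) (c : ℕ → ℂ) : gen c * CLS r = gen (fun n => c n * r) := by
  rw [mul_comm, MCF_CLS_mul_gen]
  simp [mul_comm]

lemma MCF_gen_sum {ι : Type*} (F : Finset ι) (f : ι → ℕ → ℂ) :
    gen (fun ℓ => ∑ i ∈ F, f i ℓ) = ∑ i ∈ F, gen (f i) := by
  classical
  induction F using Finset.induction_on with
  | empty => simpa using MCF_gen_zero
  | insert x F h ih =>
    rw [Finset.sum_insert h]
    rw [show (fun ℓ => ∑ i ∈ insert _ _, f i ℓ) = fun ℓ => f _ ℓ + ∑ i ∈ _, f i ℓ from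
      funext fun ℓ => Finset.sum_insert h, MCF_gen_add, ih]

lemma MCF_z_mul_gen (c : ℕ → ℂ) :
    zLS * gen c = CLS (c 0) + gen (fun ℓ => c (ℓ + 1)) := by
  unfold gen zLS CLS
  rw [← mul_assoc, HahnSeries.single_mul_single]
  norm_num
  have h1 : PowerSeries.mk c =
      PowerSeries.C (c 0) + PowerSeries.X * PowerSeries.mk (fun ℓ => c (ℓ+1)) := by
    ext n
    cases n with
    | zero => simp
    | succ k => simp [PowerSeries.coeff_succ_X_mul]
  rw [h1, map_add, map_mul, HahnSeries.ofPowerSeries_C, HahnSeries.ofPowerSeries_X]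
  rfl

/-- resolvent candidate -/
def MCF_Rg {s : ℕ} (K : Matrix (Fin s) (Fin s) ℂ) : Matrix (Fin s) (Fin s) LS :=
  Matrix.of fun i j => gen fun ℓ => (K ^ ℓ) i j

def MCF_Zm {s : ℕ} (K : Matrix (Fin s) (Fin s) ℂ) : Matrix (Fin s) (Fin s) LS :=
  zLS • 1 - K.map CLS

lemma MCF_CLS_ite (P : Prop) [Decidable P] :
    CLS (if P then (1:ℂ) else 0) = (if P then (1:LS) else 0) := by
  split <;> simp [CLS]

lemma MCF_Zm_mul_Rg {s : ℕ} (K : Matrix (Fin s) (Fin s) ℂ) : MCF_Zm K * MCF_Rg K = 1 := by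
  ext i j
  rw [Matrix.mul_apply]
  have h1 : ∀ k, (MCF_Zm K) i k * (MCF_Rg K) k j =
      (if i = k then zLS * gen (fun ℓ => (K ^ ℓ) k j) else 0)
        - gen (fun ℓ => K i k * (K ^ ℓ) k j) := by
    intro k
    simp only [MCF_Zm, MCF_Rg, Matrix.sub_apply, Matrix.smul_apply, Matrix.one_apply,
      Matrix.map_apply, Matrix.of_apply, smul_eq_mul, sub_mul, MCF_CLS_mul_gen]
    split <;> simp
  simp only [h1, Finset.sum_sub_distrib, Finset.sum_ite_eq, Finset.mem_univ, if_pos]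
  rw [← MCF_gen_sum, MCF_z_mul_gen]
  have h2 : (fun ℓ => (K ^ (ℓ + 1)) i j) = fun ℓ => ∑ k, K i k * (K ^ ℓ) k j := by
    funext ℓ
    rw [pow_succ', Matrix.mul_apply]
  rw [← h2]
  simp only [pow_zero, Matrix.one_apply]
  rw [add_sub_cancel_right, MCF_CLS_ite]

lemma MCF_Rg_mul_Zm {s : ℕ} (K : Matrix (Fin s) (Fin s) ℂ) : MCF_Rg K * MCF_Zm K = 1 := by
  ext i j
  rw [Matrix.mul_apply]
  have h1 : ∀ k, (MCF_Rg K) i k * (MCF_Zm K) k j =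
      (if k = j then zLS * gen (fun ℓ => (K ^ ℓ) i k) else 0)
        - gen (fun ℓ => (K ^ ℓ) i k * K k j) := by
    intro k
    simp only [MCF_Zm, MCF_Rg, Matrix.sub_apply, Matrix.smul_apply, Matrix.one_apply,
      Matrix.map_apply, Matrix.of_apply, smul_eq_mul, mul_sub, MCF_gen_mul_CLS]
    split <;> simp [mul_comm]
  simp only [h1, Finset.sum_sub_distrib, Finset.sum_ite_eq', Finset.mem_univ, if_pos]
  rw [← MCF_gen_sum, MCF_z_mul_gen]
  have h2 : (fun ℓ => (K ^ (ℓ + 1)) i j) = fun ℓ => ∑ k, (K ^ ℓ) i k * K k j := by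
    funext ℓ
    rw [pow_succ, Matrix.mul_apply]
  rw [← h2]
  simp only [pow_zero, Matrix.one_apply]
  rw [add_sub_cancel_right, MCF_CLS_ite]

def MCF_invZm {s : ℕ} (K : Matrix (Fin s) (Fin s) ℂ) : Invertible (MCF_Zm K) :=
  ⟨MCF_Rg K, MCF_Rg_mul_Zm K, MCF_Zm_mul_Rg K⟩

def MCF_KK (s : ℕ) (N : ℕ → ℕ → ℂ) : Matrix (Fin s) (Fin s) ℂ := Matrix.of fun i j => N i j
def MCF_shift (N : ℕ → ℕ → ℂ) : ℕ → ℕ → ℂ := fun i j => N (i+1) (j+1)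

def MCF_u (s : ℕ) (N : ℕ → ℕ → ℂ) : Fin s → LS := fun j =>
  ∑ t : Fin s, CLS (N 0 ((t:ℕ)+1)) * MCF_Rg (MCF_KK s (MCF_shift N)) t j
def MCF_v (s : ℕ) (N : ℕ → ℕ → ℂ) : Fin s → LS := fun i =>
  ∑ t : Fin s, MCF_Rg (MCF_KK s (MCF_shift N)) i t * CLS (N ((t:ℕ)+1) 0)
def MCF_g (s : ℕ) (N : ℕ → ℕ → ℂ) : LS :=
  zLS - CLS (N 0 0) - ∑ t : Fin s, CLS (N 0 ((t:ℕ)+1)) * MCF_v s N t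

lemma MCF_g_ne (s : ℕ) (N : ℕ → ℕ → ℂ) : MCF_g s N ≠ 0 := by
  have hsum : (∑ t : Fin s, CLS (N 0 ((t:ℕ)+1)) * MCF_v s N t) =
      gen (fun ℓ => ∑ t₁ : Fin s, ∑ t₂ : Fin s,
        N 0 ((t₁:ℕ)+1) * ((MCF_KK s (MCF_shift N)) ^ ℓ) t₁ t₂ * N ((t₂:ℕ)+1) 0) := by
    rw [MCF_gen_sum]
    refine Finset.sum_congr rfl fun t₁ _ => ?_
    rw [MCF_gen_sum, MCF_v, Finset.mul_sum]
    refine Finset.sum_congr rfl fun t₂ _ => ?_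
    rw [show MCF_Rg (MCF_KK s (MCF_shift N)) t₁ t₂
        = gen (fun ℓ => ((MCF_KK s (MCF_shift N)) ^ ℓ) t₁ t₂) from rfl,
      MCF_gen_mul_CLS, MCF_CLS_mul_gen]
    congr 1
    funext ℓ
    ring
  intro h
  have hc := congrArg (fun x : LS => x.coeff (-1)) h
  simp only [MCF_g, hsum, HahnSeries.coeff_sub, MCF_zLS_coeff,
    MCF_CLS_coeff _ _ (by norm_num : (-1:ℤ) ≠ 0),
    MCF_gen_coeff_nonpos _ _ (by norm_num : (-1:ℤ) ≤ 0), HahnSeries.coeff_zero] at hc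
  norm_num at hc

theorem MCF_key (s : ℕ) (N : ℕ → ℕ → ℂ) :
    (MCF_Rg (MCF_KK (s+1) N) ⟨0, s.succ_pos⟩ ⟨0, s.succ_pos⟩ = (MCF_g s N)⁻¹) ∧
    (∀ j : Fin s, MCF_Rg (MCF_KK (s+1) N) ⟨0, s.succ_pos⟩ j.succ =
      (MCF_g s N)⁻¹ * MCF_u s N j) ∧
    (∀ i : Fin s, MCF_Rg (MCF_KK (s+1) N) i.succ ⟨0, s.succ_pos⟩ =
      MCF_v s N i * (MCF_g s N)⁻¹) ∧
    (∀ i j : Fin s, MCF_Rg (MCF_KK (s+1) N) i.succ j.succ =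
      MCF_Rg (MCF_KK s (MCF_shift N)) i j + MCF_v s N i * (MCF_g s N)⁻¹ * MCF_u s N j) := by
  classical
  set K := MCF_KK (s+1) N with hK
  set K' := MCF_KK s (MCF_shift N) with hK'
  set g := MCF_g s N with hgdef
  have hg : g ≠ 0 := MCF_g_ne s N
  set ee : (Fin 1 ⊕ Fin s) ≃ Fin (s+1) := finSumFinEquiv.trans (finCongr (by omega)) with hee
  have hee_l : ∀ u : Fin 1, ((ee (Sum.inl u)) : ℕ) = 0 := by
    intro u; rw [Fin.fin_one_eq_zero u]; rfl
  have hee_r : ∀ t : Fin s, ((ee (Sum.inr t)) : ℕ) = (t:ℕ)+1 := by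
    intro t; simp [hee, finSumFinEquiv, Nat.add_comm]
  have hee_l' : ∀ u : Fin 1, ee (Sum.inl u) = ⟨0, s.succ_pos⟩ := by
    intro u; apply Fin.ext; exact hee_l u
  have hee_r' : ∀ t : Fin s, ee (Sum.inr t) = t.succ := by
    intro t; apply Fin.ext; rw [hee_r]; rfl
  have hKval : ∀ x y : Fin (s+1), K x y = N (x:ℕ) (y:ℕ) := fun _ _ => rfl
  set A : Matrix (Fin 1) (Fin 1) LS := Matrix.of fun _ _ => zLS - CLS (N 0 0) with hA
  set Bm : Matrix (Fin 1) (Fin s) LS := Matrix.of fun _ t => -CLS (N 0 ((t:ℕ)+1)) with hBm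
  set Cm : Matrix (Fin s) (Fin 1) LS := Matrix.of fun t _ => -CLS (N ((t:ℕ)+1) 0) with hCm
  have hterm : ∀ (i x : Fin s), MCF_Rg K' i x * Cm x 0
      = -(MCF_Rg K' i x * CLS (N ((x:ℕ)+1) 0)) := by
    intro i x; rw [hCm, Matrix.of_apply]; ring
  letI iK : Invertible (MCF_Zm K) := MCF_invZm K
  letI iD : Invertible (MCF_Zm K') := MCF_invZm K'
  have hinvD : ⅟(MCF_Zm K') = MCF_Rg K' := rfl
  have hW : (MCF_Zm K).submatrix ee ee = Matrix.fromBlocks A Bm Cm (MCF_Zm K') := by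
    refine Matrix.ext fun u v => ?_
    cases u with
    | inl u0 =>
      cases v with
      | inl v0 =>
        have hv : v0 = u0 := Subsingleton.elim _ _
        subst hv
        rw [Matrix.submatrix_apply, Matrix.fromBlocks_apply₁₁, hA, Matrix.of_apply]
        rw [MCF_Zm, Matrix.sub_apply, Matrix.smul_apply, Matrix.one_apply_eq,
          Matrix.map_apply, hKval, hee_l _, smul_eq_mul, mul_one]
      | inr v0 =>
        rw [Matrix.submatrix_apply, Matrix.fromBlocks_apply₁₂, hBm, Matrix.of_apply]
        rw [MCF_Zm, Matrix.sub_apply, Matrix.smul_apply, Matrix.map_apply, hKval,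
          hee_l u0, hee_r v0, smul_eq_mul]
        rw [Matrix.one_apply_ne, mul_zero, zero_sub]
        intro hcon
        have : ((ee (Sum.inl u0)) : ℕ) = ((ee (Sum.inr v0)) : ℕ) := by rw [hcon]
        rw [hee_l u0, hee_r v0] at this
        omega
    | inr u0 =>
      cases v with
      | inl v0 =>
        rw [Matrix.submatrix_apply, Matrix.fromBlocks_apply₂₁, hCm, Matrix.of_apply]
        rw [MCF_Zm, Matrix.sub_apply, Matrix.smul_apply, Matrix.map_apply, hKval,
          hee_l v0, hee_r u0, smul_eq_mul]
        rw [Matrix.one_apply_ne, mul_zero, zero_sub]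
        intro hcon
        have : ((ee (Sum.inr u0)) : ℕ) = ((ee (Sum.inl v0)) : ℕ) := by rw [hcon]
        rw [hee_l v0, hee_r u0] at this
        omega
      | inr v0 =>
        rw [Matrix.submatrix_apply, Matrix.fromBlocks_apply₂₂]
        have hiff : (ee (Sum.inr u0) = ee (Sum.inr v0)) ↔ u0 = v0 := by
          constructor
          · intro h; exact Sum.inr_injective (ee.injective h)
          · intro h; rw [h]
        have h1 : MCF_Zm K (ee (Sum.inr u0)) (ee (Sum.inr v0)) =
            zLS * (if u0 = v0 then 1 else 0) - CLS (N ((u0:ℕ)+1) ((v0:ℕ)+1)) := by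
          rw [MCF_Zm, Matrix.sub_apply, Matrix.smul_apply, Matrix.map_apply, hKval,
            hee_r u0, hee_r v0, smul_eq_mul, Matrix.one_apply, if_congr hiff rfl rfl]
        have h2 : MCF_Zm K' u0 v0 =
            zLS * (if u0 = v0 then 1 else 0) - CLS (N ((u0:ℕ)+1) ((v0:ℕ)+1)) := by
          rw [MCF_Zm, Matrix.sub_apply, Matrix.smul_apply, Matrix.map_apply,
            smul_eq_mul, Matrix.one_apply]
          rfl
        rw [h1, h2]
  -- the Schur complement is the 1×1 matrix (g)
  have hS : A - Bm * ⅟(MCF_Zm K') * Cm = Matrix.of fun _ _ => g := by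
    refine Matrix.ext fun u v => ?_
    have hu : u = 0 := Subsingleton.elim _ _
    have hv : v = 0 := Subsingleton.elim _ _
    subst hu; subst hv
    rw [hinvD, Matrix.sub_apply, hA, Matrix.of_apply, Matrix.of_apply, hgdef, MCF_g,
      sub_sub, sub_sub]
    refine congrArg (fun x => zLS - (CLS (N 0 0) + x)) ?_
    rw [Matrix.mul_assoc, Matrix.mul_apply]
    refine Finset.sum_congr rfl fun t₁ _ => ?_
    rw [Matrix.mul_apply, MCF_v, ← hK',
      Finset.sum_congr rfl fun x _ => hterm t₁ x, Finset.sum_neg_distrib, hBm,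
      Matrix.of_apply]
    ring
  letI iS : Invertible (Matrix.of (fun _ _ => g) : Matrix (Fin 1) (Fin 1) LS) := by
    refine ⟨Matrix.of fun _ _ => g⁻¹, ?_, ?_⟩ <;>
    · refine Matrix.ext fun u v => ?_
      have hu : u = 0 := Subsingleton.elim _ _
      have hv : v = 0 := Subsingleton.elim _ _
      subst hu; subst hv
      rw [Matrix.mul_apply, Fin.sum_univ_one, Matrix.of_apply, Matrix.of_apply,
        Matrix.one_apply_eq]
      first
        | rw [inv_mul_cancel₀ hg]
        | rw [mul_inv_cancel₀ hg]
  letI iS' : Invertible (A - Bm * ⅟(MCF_Zm K') * Cm) := by rw [hS]; exact iS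
  have hinvS : ⅟(A - Bm * ⅟(MCF_Zm K') * Cm) = Matrix.of fun _ _ => g⁻¹ := by
    apply invOf_eq_right_inv
    rw [hS]
    refine Matrix.ext fun u v => ?_
    have hu : u = 0 := Subsingleton.elim _ _
    have hv : v = 0 := Subsingleton.elim _ _
    subst hu; subst hv
    rw [Matrix.mul_apply, Fin.sum_univ_one, Matrix.of_apply, Matrix.of_apply,
      Matrix.one_apply_eq, mul_inv_cancel₀ hg]
  letI iFB : Invertible (Matrix.fromBlocks A Bm Cm (MCF_Zm K')) :=
    Matrix.fromBlocks₂₂Invertible A Bm Cm (MCF_Zm K')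
  have hXW : (MCF_Rg K).submatrix ee ee * Matrix.fromBlocks A Bm Cm (MCF_Zm K') = 1 := by
    rw [← hW, Matrix.submatrix_mul_equiv, MCF_Rg_mul_Zm, Matrix.submatrix_one_equiv]
  have hWF : Matrix.fromBlocks A Bm Cm (MCF_Zm K') *
      Matrix.fromBlocks (⅟(A - Bm * ⅟(MCF_Zm K') * Cm))
        (-(⅟(A - Bm * ⅟(MCF_Zm K') * Cm) * Bm * ⅟(MCF_Zm K')))
        (-(⅟(MCF_Zm K') * Cm * ⅟(A - Bm * ⅟(MCF_Zm K') * Cm)))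
        (⅟(MCF_Zm K') + ⅟(MCF_Zm K') * Cm * ⅟(A - Bm * ⅟(MCF_Zm K') * Cm) * Bm * ⅟(MCF_Zm K')) =
      1 := by
    have h := mul_invOf_self (Matrix.fromBlocks A Bm Cm (MCF_Zm K'))
    rwa [Matrix.invOf_fromBlocks₂₂_eq] at h
  have hmain : (MCF_Rg K).submatrix ee ee =
      Matrix.fromBlocks (⅟(A - Bm * ⅟(MCF_Zm K') * Cm))
        (-(⅟(A - Bm * ⅟(MCF_Zm K') * Cm) * Bm * ⅟(MCF_Zm K')))
        (-(⅟(MCF_Zm K') * Cm * ⅟(A - Bm * ⅟(MCF_Zm K') * Cm)))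
        (⅟(MCF_Zm K') + ⅟(MCF_Zm K') * Cm * ⅟(A - Bm * ⅟(MCF_Zm K') * Cm) * Bm * ⅟(MCF_Zm K')) :=
    left_inv_eq_right_inv hXW hWF
  rw [hinvS, hinvD] at hmain
  have hentry : ∀ u v, MCF_Rg K (ee u) (ee v) =
      Matrix.fromBlocks (Matrix.of fun _ _ => g⁻¹ : Matrix (Fin 1) (Fin 1) LS)
        (-((Matrix.of (fun _ _ => g⁻¹) : Matrix (Fin 1) (Fin 1) LS) * Bm * MCF_Rg K'))
        (-(MCF_Rg K' * Cm * (Matrix.of fun _ _ => g⁻¹ : Matrix (Fin 1) (Fin 1) LS)))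
        (MCF_Rg K' + MCF_Rg K' * Cm * (Matrix.of (fun _ _ => g⁻¹) : Matrix (Fin 1) (Fin 1) LS) * Bm * MCF_Rg K') u v := by
    intro u v
    have := congrFun (congrFun hmain u) v
    rwa [Matrix.submatrix_apply] at this
  refine ⟨?_, ?_, ?_, ?_⟩
  · have h := hentry (Sum.inl 0) (Sum.inl 0)
    rw [hee_l' 0, Matrix.fromBlocks_apply₁₁, Matrix.of_apply] at h
    exact h
  · intro j
    have h := hentry (Sum.inl 0) (Sum.inr j)
    rw [hee_l' 0, hee_r' j, Matrix.fromBlocks_apply₁₂, Matrix.neg_apply,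
      Matrix.mul_apply] at h
    rw [h, MCF_u, Finset.mul_sum, ← Finset.sum_neg_distrib]
    refine Finset.sum_congr rfl fun t _ => ?_
    rw [Matrix.mul_apply, Fin.sum_univ_one, Matrix.of_apply, hBm, Matrix.of_apply, ← hK']
    ring
  · intro i
    have h := hentry (Sum.inr i) (Sum.inl 0)
    rw [hee_l' 0, hee_r' i, Matrix.fromBlocks_apply₂₁, Matrix.neg_apply,
      Matrix.mul_apply, Fin.sum_univ_one, Matrix.of_apply] at h
    rw [h, Matrix.mul_apply, MCF_v, ← hK',
      Finset.sum_congr rfl fun x _ => hterm i x, Finset.sum_neg_distrib]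
    ring
  · intro i j
    have h := hentry (Sum.inr i) (Sum.inr j)
    rw [hee_r' i, hee_r' j, Matrix.fromBlocks_apply₂₂, Matrix.add_apply] at h
    rw [h]
    refine congrArg (fun x => MCF_Rg K' i j + x) ?_
    have hvg : ∀ t : Fin s, (MCF_Rg K' * Cm
          * (Matrix.of (fun _ _ => g⁻¹) : Matrix (Fin 1) (Fin 1) LS) * Bm) i t
        = MCF_v s N i * g⁻¹ * CLS (N 0 ((t:ℕ)+1)) := by
      intro t
      rw [Matrix.mul_apply, Fin.sum_univ_one, Matrix.mul_apply, Fin.sum_univ_one,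
        Matrix.mul_apply, Matrix.of_apply, hBm, Matrix.of_apply, MCF_v, ← hK',
        Finset.sum_congr rfl fun x _ => hterm i x, Finset.sum_neg_distrib]
      ring
    rw [Matrix.mul_apply,
      show (∑ t : Fin s, (MCF_Rg K' * Cm
            * (Matrix.of (fun _ _ => g⁻¹) : Matrix (Fin 1) (Fin 1) LS) * Bm) i t
          * MCF_Rg K' t j)
        = ∑ t : Fin s, MCF_v s N i * g⁻¹ * (CLS (N 0 ((t:ℕ)+1)) * MCF_Rg K' t j) by
      refine Finset.sum_congr rfl fun t _ => ?_
      rw [hvg t]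
      ring]
    rw [← Finset.mul_sum, MCF_u, ← hK']


def MCF_Gpad (p q s : ℕ) (N : ℕ → ℕ → ℂ) : Matrix (Fin q) (Fin p) LS :=
  Matrix.of fun i j => if h : (i:ℕ) < s ∧ (j:ℕ) < s then
    gen (fun ℓ => ((MCF_KK s N) ^ ℓ) ⟨(i:ℕ), h.1⟩ ⟨(j:ℕ), h.2⟩)
  else if (i:ℕ) = (j:ℕ) then zLS⁻¹ else 0

def MCF_Nf (p q : ℕ) (a : ℤ → ℤ → ℂ) (m : ℕ) : ℕ → ℕ → ℂ := fun i j =>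
  Hmat p q a (i+m) (j+m)

lemma MCF_Nf_succ (p q : ℕ) (a : ℤ → ℤ → ℂ) (m : ℕ) :
    MCF_Nf p q a (m+1) = MCF_shift (MCF_Nf p q a m) := by
  funext i j
  simp only [MCF_Nf, MCF_shift]
  congr 1 <;> omega

lemma MCF_N00 (p q : ℕ) (hp : 0 < p) (hq : 0 < q) (a : ℤ → ℤ → ℂ) (m : ℕ) :
    MCF_Nf p q a m 0 0 = a 0 (m:ℤ) := by
  simp only [MCF_Nf, Hmat, Nat.zero_add]
  rw [if_pos, sub_self, min_self]
  constructor <;> push_cast <;> omega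

lemma MCF_Nrow (p q : ℕ) (a : ℤ → ℤ → ℂ) (m t : ℕ) (ht : t + 1 ≤ q) :
    MCF_Nf p q a m 0 (t+1) = a ((t:ℤ)+1) (m:ℤ) := by
  simp only [MCF_Nf, Hmat, Nat.zero_add]
  rw [if_pos]
  · congr 1 <;> push_cast <;> omega
  · constructor <;> push_cast <;> omega

lemma MCF_Nrow0 (p q : ℕ) (a : ℤ → ℤ → ℂ) (m t : ℕ) (ht : q < t + 1) :
    MCF_Nf p q a m 0 (t+1) = 0 := by
  simp only [MCF_Nf, Hmat, Nat.zero_add]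
  rw [if_neg]
  intro ⟨h1, h2⟩
  push_cast at h2
  omega

lemma MCF_Ncol (p q : ℕ) (a : ℤ → ℤ → ℂ) (m t : ℕ) (ht : t + 1 ≤ p) :
    MCF_Nf p q a m (t+1) 0 = a (-((t:ℤ)+1)) (m:ℤ) := by
  simp only [MCF_Nf, Hmat, Nat.zero_add]
  rw [if_pos]
  · congr 1 <;> push_cast <;> omega
  · constructor <;> push_cast <;> omega

lemma MCF_Ncol0 (p q : ℕ) (a : ℤ → ℤ → ℂ) (m t : ℕ) (ht : p < t + 1) :
    MCF_Nf p q a m (t+1) 0 = 0 := by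
  simp only [MCF_Nf, Hmat, Nat.zero_add]
  rw [if_neg]
  intro ⟨h1, h2⟩
  push_cast at h1
  omega

lemma MCF_fin_sum_eq {A : Type*} [AddCommMonoid A] (q s : ℕ) (f : ℕ → A)
    (hq : ∀ t, q ≤ t → f t = 0) (hs : ∀ t, s ≤ t → f t = 0) :
    ∑ t : Fin q, f (t:ℕ) = ∑ t : Fin s, f (t:ℕ) := by
  rw [Fin.sum_univ_eq_sum_range, Fin.sum_univ_eq_sum_range]
  rw [Finset.sum_subset (Finset.range_subset_range.2 (le_max_left q s))
    (fun x _ hx => hq x (by simpa [Finset.mem_range, not_lt] using hx))]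
  rw [Finset.sum_subset (Finset.range_subset_range.2 (le_max_right q s))
    (fun x _ hx => hs x (by simpa [Finset.mem_range, not_lt] using hx))]

theorem MCF_step (p q n : ℕ) (hp : 0 < p) (hq : 0 < q) (a : ℤ → ℤ → ℂ) (m : ℕ) (hm : m < n) :
    ((alphaZ q p a m + rhoP q n a m * MCF_Gpad p q (n-m-1) (MCF_Nf p q a (m+1)) * rhoM p n a m)
        ⟨q-1, Nat.sub_lt hq one_pos⟩ ⟨p-1, Nat.sub_lt hp one_pos⟩ ≠ 0) ∧
    MCF_Gpad p q (n-m) (MCF_Nf p q a m) =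
      tauRho p q n hq hp a m (MCF_Gpad p q (n-m-1) (MCF_Nf p q a (m+1))) := by
  set s := n - m - 1 with hsdef
  have hnm : n - m = s + 1 := by omega
  set N := MCF_Nf p q a m with hN
  have hsh : MCF_Nf p q a (m+1) = MCF_shift N := MCF_Nf_succ p q a m
  rw [hnm, hsh]
  set G' := MCF_Gpad p q s (MCF_shift N) with hG'
  obtain ⟨k1, k2, k3, k4⟩ := MCF_key s N
  set g := MCF_g s N with hg
  have hgne : g ≠ 0 := MCF_g_ne s N
  set E := alphaZ q p a m + rhoP q n a m * G' * rhoM p n a m with hE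
  have hCLS0 : CLS 0 = 0 := map_zero (HahnSeries.C : ℂ →+* LS)
  have hG'in : ∀ (i : Fin q) (j : Fin p) (h1 : (i:ℕ) < s) (h2 : (j:ℕ) < s),
      G' i j = MCF_Rg (MCF_KK s (MCF_shift N)) ⟨(i:ℕ), h1⟩ ⟨(j:ℕ), h2⟩ := by
    intro i j h1 h2
    rw [hG', MCF_Gpad]
    simp only [Matrix.of_apply]
    rw [dif_pos ⟨h1, h2⟩]
    rfl
  have hG'out : ∀ (i : Fin q) (j : Fin p), ¬((i:ℕ) < s ∧ (j:ℕ) < s) →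
      G' i j = if (i:ℕ) = (j:ℕ) then zLS⁻¹ else 0 := by
    intro i j h
    rw [hG', MCF_Gpad]
    simp only [Matrix.of_apply]
    rw [dif_neg h]
  have hPapply : ∀ (i : Fin q), (i:ℕ) ≠ q-1 → ∀ (X : Matrix (Fin q) (Fin p) LS) (j : Fin p),
      (rhoP q n a m * X) i j = X i j := by
    intro i hi X j
    rw [Matrix.mul_apply, Finset.sum_eq_single i]
    · simp [rhoP, if_neg hi]
    · intro b _ hb
      simp only [rhoP, if_neg hi, if_neg (Ne.symm hb), zero_mul]
    · intro hcon
      exact absurd (Finset.mem_univ i) hcon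
  have hMapply : ∀ (j : Fin p), (j:ℕ) ≠ p-1 → ∀ (X : Matrix (Fin q) (Fin p) LS) (i : Fin q),
      (X * rhoM p n a m) i j = X i j := by
    intro j hj X i
    rw [Matrix.mul_apply, Finset.sum_eq_single j]
    · simp [rhoM, if_neg hj]
    · intro b _ hb
      simp only [rhoM, if_neg hj, if_neg hb, mul_zero]
    · intro hcon
      exact absurd (Finset.mem_univ j) hcon
  have hbP : ∀ (i0 : Fin q), (i0:ℕ) = q-1 → ∀ (t : Fin q),
      rhoP q n a m i0 t = -CLS (if (t:ℕ)+1 ≤ s then N 0 ((t:ℕ)+1) else 0) := by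
    intro i0 hi0 t
    simp only [rhoP, if_pos hi0]
    congr 1
    by_cases h : (t:ℕ)+1 ≤ n-m-1
    · rw [if_pos h, if_pos (show (t:ℕ)+1 ≤ s by omega), hN,
        MCF_Nrow p q a m (t:ℕ) (by have := t.isLt; omega)]
    · rw [if_neg h, if_neg (show ¬((t:ℕ)+1 ≤ s) by omega)]
  have hbM : ∀ (j0 : Fin p), (j0:ℕ) = p-1 → ∀ (t : Fin p),
      rhoM p n a m t j0 = CLS (if (t:ℕ)+1 ≤ s then N ((t:ℕ)+1) 0 else 0) := by
    intro j0 hj0 t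
    simp only [rhoM, if_pos hj0]
    congr 1
    by_cases h : (t:ℕ)+1 ≤ n-m-1
    · rw [if_pos h, if_pos (show (t:ℕ)+1 ≤ s by omega), hN,
        MCF_Ncol p q a m (t:ℕ) (by have := t.isLt; omega)]
    · rw [if_neg h, if_neg (show ¬((t:ℕ)+1 ≤ s) by omega)]
  have hGM_last : ∀ (t : Fin q) (j0 : Fin p), (j0:ℕ) = p-1 →
      (G' * rhoM p n a m) t j0 =
        (if h : (t:ℕ) < s then MCF_v s N ⟨(t:ℕ), h⟩ else 0) := by
    intro t j0 hj0
    rw [Matrix.mul_apply]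
    by_cases ht : (t:ℕ) < s
    · rw [dif_pos ht, MCF_v]
      set f : ℕ → LS := fun x => if hx : x < p ∧ x < s then
        MCF_Rg (MCF_KK s (MCF_shift N)) ⟨(t:ℕ), ht⟩ ⟨x, hx.2⟩ * CLS (N (x+1) 0) else 0 with hf
      have hL : ∀ (x : Fin p), G' t x * rhoM p n a m x j0 = f (x:ℕ) := by
        intro x
        rw [hbM j0 hj0 x]; simp only [hf]
        by_cases hx : (x:ℕ) < s
        · rw [dif_pos ⟨x.isLt, hx⟩, hG'in t x ht hx, if_pos (show (x:ℕ)+1 ≤ s by omega)]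
        · rw [dif_neg (fun hc => hx hc.2), if_neg (show ¬((x:ℕ)+1 ≤ s) by omega), hCLS0,
            mul_zero]
      have hR : ∀ (x : Fin s),
          MCF_Rg (MCF_KK s (MCF_shift N)) ⟨(t:ℕ), ht⟩ x * CLS (N ((x:ℕ)+1) 0) = f (x:ℕ) := by
        intro x
        simp only [hf]
        by_cases hx : (x:ℕ) < p
        · rw [dif_pos ⟨hx, x.isLt⟩]
        · rw [dif_neg (fun hc => hx hc.1), hN, MCF_Ncol0 p q a m (x:ℕ) (by omega), hCLS0,
            mul_zero]
      calc ∑ x : Fin p, G' t x * rhoM p n a m x j0 = ∑ x : Fin p, f (x:ℕ) :=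
            Finset.sum_congr rfl fun x _ => hL x
        _ = ∑ x : Fin s, f (x:ℕ) := MCF_fin_sum_eq p s f
            (fun x hx => by simp only [hf]; exact dif_neg (fun hc => by omega))
            (fun x hx => by simp only [hf]; exact dif_neg (fun hc => by omega))
        _ = ∑ x : Fin s, MCF_Rg (MCF_KK s (MCF_shift N)) ⟨(t:ℕ), ht⟩ x
              * CLS (N ((x:ℕ)+1) 0) := (Finset.sum_congr rfl fun x _ => hR x).symm
    · rw [dif_neg ht]
      apply Finset.sum_eq_zero
      intro x _
      rw [hbM j0 hj0 x, hG'out t x (fun hc => ht hc.1)]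
      by_cases hx : (t:ℕ) = (x:ℕ)
      · rw [if_pos hx, if_neg (show ¬((x:ℕ)+1 ≤ s) by omega), hCLS0, mul_zero]
      · rw [if_neg hx, zero_mul]
  have hEcorner : ∀ (i0 : Fin q) (j0 : Fin p), (i0:ℕ) = q-1 → (j0:ℕ) = p-1 →
      E i0 j0 = g := by
    intro i0 j0 hi0 hj0
    rw [hE, Matrix.add_apply,
      show rhoP q n a m * G' * rhoM p n a m
        = rhoP q n a m * (G' * rhoM p n a m) from Matrix.mul_assoc _ _ _,
      Matrix.mul_apply]
    simp only [alphaZ, if_pos (And.intro hi0 hj0)]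
    rw [Finset.sum_congr rfl (fun t _ => by
      rw [hbP i0 hi0 t, hGM_last t j0 hj0]; ring :
      ∀ t ∈ Finset.univ, rhoP q n a m i0 t * (G' * rhoM p n a m) t j0
        = -(CLS (if (t:ℕ)+1 ≤ s then N 0 ((t:ℕ)+1) else 0)
            * (if h : (t:ℕ) < s then MCF_v s N ⟨(t:ℕ), h⟩ else 0)))]
    rw [Finset.sum_neg_distrib, hg, MCF_g,
      show a 0 (m:ℤ) = N 0 0 from (MCF_N00 p q hp hq a m).symm]
    set f2 : ℕ → LS := fun x => if hx : x < q ∧ x < s then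
      CLS (N 0 (x+1)) * MCF_v s N ⟨x, hx.2⟩ else 0 with hf2
    have hL2 : ∀ t : Fin q, CLS (if (t:ℕ)+1 ≤ s then N 0 ((t:ℕ)+1) else 0)
        * (if h : (t:ℕ) < s then MCF_v s N ⟨(t:ℕ), h⟩ else 0) = f2 (t:ℕ) := by
      intro t
      by_cases h : (t:ℕ) < s
      · simp only [hf2]
        rw [dif_pos h, if_pos (show (t:ℕ)+1 ≤ s by omega), dif_pos ⟨t.isLt, h⟩]
      · simp only [hf2]
        rw [dif_neg h, mul_zero, dif_neg (fun hc : _ ∧ _ => h hc.2)]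
    have hR2 : ∀ t : Fin s, CLS (N 0 ((t:ℕ)+1)) * MCF_v s N t = f2 (t:ℕ) := by
      intro t
      simp only [hf2]
      by_cases h : (t:ℕ) < q
      · rw [dif_pos ⟨h, t.isLt⟩]
      · rw [dif_neg (fun hc => h hc.1), hN, MCF_Nrow0 p q a m (t:ℕ) (by omega), hCLS0,
          zero_mul]
    rw [Finset.sum_congr rfl (fun t _ => hL2 t),
      MCF_fin_sum_eq q s f2 (fun x hx => by simp only [hf2]; exact dif_neg (fun hc => by omega))
        (fun x hx => by simp only [hf2]; exact dif_neg (fun hc => by omega)),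
      ← Finset.sum_congr rfl (fun t _ => hR2 t)]
    ring
  have hErow : ∀ (i0 : Fin q), (i0:ℕ) = q-1 → ∀ (j : Fin p), (j:ℕ) ≠ p-1 →
      E i0 j = -(if h : (j:ℕ) < s then MCF_u s N ⟨(j:ℕ), h⟩ else 0) := by
    intro i0 hi0 j hj
    rw [hE, Matrix.add_apply,
      show rhoP q n a m * G' * rhoM p n a m
        = rhoP q n a m * (G' * rhoM p n a m) from Matrix.mul_assoc _ _ _,
      Matrix.mul_apply]
    simp only [alphaZ, if_neg (fun hc : _ ∧ _ => hj hc.2)]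
    rw [Finset.sum_congr rfl (fun t _ => by
      rw [hbP i0 hi0 t, hMapply j hj G' t]; ring :
      ∀ t ∈ Finset.univ, rhoP q n a m i0 t * (G' * rhoM p n a m) t j
        = -(CLS (if (t:ℕ)+1 ≤ s then N 0 ((t:ℕ)+1) else 0) * G' t j))]
    rw [Finset.sum_neg_distrib, zero_add]
    by_cases hjs : (j:ℕ) < s
    · rw [dif_pos hjs, MCF_u]
      set f3 : ℕ → LS := fun x => if hx : x < q ∧ x < s then
        CLS (N 0 (x+1)) * MCF_Rg (MCF_KK s (MCF_shift N)) ⟨x, hx.2⟩ ⟨(j:ℕ), hjs⟩ else 0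
        with hf3
      have hL3 : ∀ t : Fin q,
          CLS (if (t:ℕ)+1 ≤ s then N 0 ((t:ℕ)+1) else 0) * G' t j = f3 (t:ℕ) := by
        intro t
        by_cases h : (t:ℕ) < s
        · simp only [hf3]
          rw [if_pos (show (t:ℕ)+1 ≤ s by omega), hG'in t j h hjs, dif_pos ⟨t.isLt, h⟩]
        · simp only [hf3]
          rw [if_neg (show ¬((t:ℕ)+1 ≤ s) by omega), hCLS0, zero_mul,
            dif_neg (fun hc : _ ∧ _ => h hc.2)]
      have hR3 : ∀ t : Fin s,
          CLS (N 0 ((t:ℕ)+1)) * MCF_Rg (MCF_KK s (MCF_shift N)) t ⟨(j:ℕ), hjs⟩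
            = f3 (t:ℕ) := by
        intro t
        simp only [hf3]
        by_cases h : (t:ℕ) < q
        · rw [dif_pos ⟨h, t.isLt⟩]
        · rw [dif_neg (fun hc => h hc.1), hN, MCF_Nrow0 p q a m (t:ℕ) (by omega), hCLS0,
            zero_mul]
      rw [Finset.sum_congr rfl (fun t _ => hL3 t),
        MCF_fin_sum_eq q s f3 (fun x hx => by simp only [hf3]; exact dif_neg (fun hc => by omega))
          (fun x hx => by simp only [hf3]; exact dif_neg (fun hc => by omega)),
        ← Finset.sum_congr rfl (fun t _ => hR3 t)]
    · rw [dif_neg hjs, neg_zero, neg_eq_zero]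
      apply Finset.sum_eq_zero
      intro t _
      by_cases h : (t:ℕ) < s
      · rw [hG'out t j (fun hc => hjs hc.2), if_neg (show ¬((t:ℕ) = (j:ℕ)) by omega),
          mul_zero]
      · rw [if_neg (show ¬((t:ℕ)+1 ≤ s) by omega), hCLS0, zero_mul]
  have hEcol : ∀ (i : Fin q), (i:ℕ) ≠ q-1 → ∀ (j0 : Fin p), (j0:ℕ) = p-1 →
      E i j0 = (if h : (i:ℕ) < s then MCF_v s N ⟨(i:ℕ), h⟩ else 0) := by
    intro i hi j0 hj0
    rw [hE, Matrix.add_apply,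
      show rhoP q n a m * G' * rhoM p n a m
        = rhoP q n a m * (G' * rhoM p n a m) from Matrix.mul_assoc _ _ _,
      hPapply i hi _ j0, hGM_last i j0 hj0]
    simp only [alphaZ, if_neg (fun hc : _ ∧ _ => hi hc.1), zero_add]
  have hEint : ∀ (i : Fin q), (i:ℕ) ≠ q-1 → ∀ (j : Fin p), (j:ℕ) ≠ p-1 →
      E i j = G' i j := by
    intro i hi j hj
    rw [hE, Matrix.add_apply,
      show rhoP q n a m * G' * rhoM p n a m
        = rhoP q n a m * (G' * rhoM p n a m) from Matrix.mul_assoc _ _ _,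
      hPapply i hi _ j, hMapply j hj G' i]
    simp only [alphaZ, if_neg (fun hc : _ ∧ _ => hi hc.1), zero_add]
  have hRgeq : ∀ (x y : Fin (s+1)),
      gen (fun ℓ => ((MCF_KK (s+1) N) ^ ℓ) x y) = MCF_Rg (MCF_KK (s+1) N) x y :=
    fun _ _ => rfl
  constructor
  · rw [hEcorner ⟨q-1, Nat.sub_lt hq one_pos⟩ ⟨p-1, Nat.sub_lt hp one_pos⟩ rfl rfl]
    exact hgne
  · rw [tauRho]
    refine Matrix.ext fun i j => ?_
    rw [MCF_Gpad]
    simp only [Matrix.of_apply, Tinv]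
    rw [← hE]
    by_cases hi0 : (i:ℕ) = 0 <;> by_cases hj0 : (j:ℕ) = 0
    · rw [dif_pos hi0, dif_pos hj0,
        dif_pos (show (i:ℕ) < s+1 ∧ (j:ℕ) < s+1 by omega), hRgeq,
        show (⟨(i:ℕ), by omega⟩ : Fin (s+1)) = ⟨0, s.succ_pos⟩ from Fin.ext hi0,
        show (⟨(j:ℕ), by omega⟩ : Fin (s+1)) = ⟨0, s.succ_pos⟩ from Fin.ext hj0,
        k1, hEcorner _ _ rfl rfl, one_div]
    · rw [dif_pos hi0, dif_neg hj0,
        hEcorner ⟨q-1, Nat.sub_lt hq one_pos⟩ ⟨p-1, Nat.sub_lt hp one_pos⟩ rfl rfl,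
        hErow ⟨q-1, Nat.sub_lt hq one_pos⟩ rfl ⟨(j:ℕ)-1, by have := j.isLt; omega⟩
          (show ((j:ℕ)-1) ≠ p-1 by have := j.isLt; omega)]
      by_cases hjs : (j:ℕ) < s+1
      · rw [dif_pos (show (i:ℕ) < s+1 ∧ (j:ℕ) < s+1 by omega), hRgeq,
          show (⟨(i:ℕ), by omega⟩ : Fin (s+1)) = ⟨0, s.succ_pos⟩ from Fin.ext hi0,
          show (⟨(j:ℕ), by omega⟩ : Fin (s+1))
            = Fin.succ ⟨(j:ℕ)-1, by omega⟩ from Fin.ext (by simp [Fin.succ]; omega),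
          k2, dif_pos (show (j:ℕ)-1 < s by omega), neg_neg, div_eq_mul_inv]
        ring
      · rw [dif_neg (fun hc : _ ∧ _ => hjs hc.2), if_neg (show ¬((i:ℕ) = (j:ℕ)) by omega),
          dif_neg (show ¬((j:ℕ)-1 < s) by omega)]
        norm_num
    · rw [dif_neg hi0, dif_pos hj0,
        hEcorner ⟨q-1, Nat.sub_lt hq one_pos⟩ ⟨p-1, Nat.sub_lt hp one_pos⟩ rfl rfl,
        hEcol ⟨(i:ℕ)-1, by have := i.isLt; omega⟩
          (show ((i:ℕ)-1) ≠ q-1 by have := i.isLt; omega) ⟨p-1, Nat.sub_lt hp one_pos⟩ rfl]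
      by_cases his : (i:ℕ) < s+1
      · rw [dif_pos (show (i:ℕ) < s+1 ∧ (j:ℕ) < s+1 by omega), hRgeq,
          show (⟨(j:ℕ), by omega⟩ : Fin (s+1)) = ⟨0, s.succ_pos⟩ from Fin.ext hj0,
          show (⟨(i:ℕ), by omega⟩ : Fin (s+1))
            = Fin.succ ⟨(i:ℕ)-1, by omega⟩ from Fin.ext (by simp [Fin.succ]; omega),
          k3, dif_pos (show (i:ℕ)-1 < s by omega), div_eq_mul_inv]
      · rw [dif_neg (fun hc : _ ∧ _ => his hc.1), if_neg (show ¬((i:ℕ) = (j:ℕ)) by omega),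
          dif_neg (show ¬((i:ℕ)-1 < s) by omega), zero_div]
    · rw [dif_neg hi0, dif_neg hj0,
        hEcorner ⟨q-1, Nat.sub_lt hq one_pos⟩ ⟨p-1, Nat.sub_lt hp one_pos⟩ rfl rfl,
        hEint ⟨(i:ℕ)-1, by have := i.isLt; omega⟩
          (show ((i:ℕ)-1) ≠ q-1 by have := i.isLt; omega)
          ⟨(j:ℕ)-1, by have := j.isLt; omega⟩
          (show ((j:ℕ)-1) ≠ p-1 by have := j.isLt; omega),
        hEcol ⟨(i:ℕ)-1, by have := i.isLt; omega⟩
          (show ((i:ℕ)-1) ≠ q-1 by have := i.isLt; omega) ⟨p-1, Nat.sub_lt hp one_pos⟩ rfl,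
        hErow ⟨q-1, Nat.sub_lt hq one_pos⟩ rfl ⟨(j:ℕ)-1, by have := j.isLt; omega⟩
          (show ((j:ℕ)-1) ≠ p-1 by have := j.isLt; omega)]
      by_cases hbo : (i:ℕ) < s+1 ∧ (j:ℕ) < s+1
      · rw [dif_pos hbo, hRgeq,
          show (⟨(i:ℕ), by omega⟩ : Fin (s+1))
            = Fin.succ ⟨(i:ℕ)-1, by omega⟩ from Fin.ext (by simp [Fin.succ]; omega),
          show (⟨(j:ℕ), by omega⟩ : Fin (s+1))
            = Fin.succ ⟨(j:ℕ)-1, by omega⟩ from Fin.ext (by simp [Fin.succ]; omega),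
          k4, hG'in ⟨(i:ℕ)-1, by have := i.isLt; omega⟩ ⟨(j:ℕ)-1, by have := j.isLt; omega⟩
            (show (i:ℕ)-1 < s by omega) (show (j:ℕ)-1 < s by omega),
          dif_pos (show (i:ℕ)-1 < s by omega), dif_pos (show (j:ℕ)-1 < s by omega)]
        rw [eq_div_iff hgne, add_mul,
          show MCF_v s N ⟨(i:ℕ)-1, by omega⟩ * g⁻¹ * MCF_u s N ⟨(j:ℕ)-1, by omega⟩ * g
            = MCF_v s N ⟨(i:ℕ)-1, by omega⟩ * MCF_u s N ⟨(j:ℕ)-1, by omega⟩ from by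
            calc _ = MCF_v s N ⟨(i:ℕ)-1, by omega⟩ * MCF_u s N ⟨(j:ℕ)-1, by omega⟩
                * (g⁻¹ * g) := by ring
              _ = _ := by rw [inv_mul_cancel₀ hgne, mul_one]]
        ring
      · rw [dif_neg hbo,
          hG'out ⟨(i:ℕ)-1, by have := i.isLt; omega⟩ ⟨(j:ℕ)-1, by have := j.isLt; omega⟩
            (show ¬((i:ℕ)-1 < s ∧ (j:ℕ)-1 < s) by omega)]
        have hzero : (if h : (i:ℕ)-1 < s then MCF_v s N ⟨(i:ℕ)-1, h⟩ else 0)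
            * -(if h : (j:ℕ)-1 < s then MCF_u s N ⟨(j:ℕ)-1, h⟩ else 0) = 0 := by
          rcases (show ¬((i:ℕ)-1 < s) ∨ ¬((j:ℕ)-1 < s) by omega) with h | h
          · rw [dif_neg h, zero_mul]
          · rw [dif_neg h, neg_zero, mul_zero]
        rw [hzero, sub_zero, mul_div_assoc, div_self hgne, mul_one]
        by_cases hij : (i:ℕ) = (j:ℕ)
        · rw [if_pos hij, if_pos (show (i:ℕ)-1 = (j:ℕ)-1 by omega)]
        · rw [if_neg hij, if_neg (show ¬((i:ℕ)-1 = (j:ℕ)-1) by omega)]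

lemma MCF_chain_succ {M : Type*} (τ : ℕ → M → M) (n : ℕ) (X : M) (m : ℕ) (hm : m < n) :
    chainFrom τ n X m = τ m (chainFrom τ n X (m+1)) := by
  have h : n - m = (n - (m+1)) + 1 := by omega
  rw [chainFrom, chainFrom, h, List.range_succ_eq_map, List.foldr_cons, List.foldr_map,
    Nat.add_zero]
  refine congrArg (fun f => τ m (List.foldr f X (List.range (n-(m+1))))) ?_
  funext t Y
  show τ (m + Nat.succ t) Y = τ (m+1+t) Y
  congr 1
  omega

lemma MCF_chain (p q n : ℕ) (hp : 0 < p) (hq : 0 < q) (a : ℤ → ℤ → ℂ) :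
    ∀ d m, m + d = n →
    chainFrom (tauRho p q n hq hp a) n (Xdiag p q) m = MCF_Gpad p q (n-m) (MCF_Nf p q a m) ∧
    ∀ k, m ≤ k → k < n →
      (alphaZ q p a k + rhoP q n a k *
          chainFrom (tauRho p q n hq hp a) n (Xdiag p q) (k+1) * rhoM p n a k)
        ⟨q-1, Nat.sub_lt hq one_pos⟩ ⟨p-1, Nat.sub_lt hp one_pos⟩ ≠ 0 := by
  intro d
  induction d with
  | zero =>
    intro m hm
    have hmn : m = n := by omega
    subst hmn
    constructor
    · rw [chainFrom, Nat.sub_self]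
      refine Matrix.ext fun i j => ?_
      rw [MCF_Gpad]
      simp only [Matrix.of_apply, List.range_zero, List.foldr_nil]
      rw [dif_neg (by omega)]
      rfl
    · intro k hk1 hk2
      omega
  | succ d ih =>
    intro m hm
    have hmn : m < n := by omega
    have ihm := ih (m+1) (by omega)
    have hstep := MCF_step p q n hp hq a m hmn
    have hnn : n - (m+1) = n - m - 1 := by omega
    have hcs := MCF_chain_succ (tauRho p q n hq hp a) n (Xdiag p q) m hmn
    have hch1 : chainFrom (tauRho p q n hq hp a) n (Xdiag p q) (m+1)
        = MCF_Gpad p q (n-m-1) (MCF_Nf p q a (m+1)) := by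
      rw [ihm.1, hnn]
    constructor
    · rw [hcs, hch1, ← hstep.2]
    · intro k hk1 hk2
      rcases Nat.eq_or_lt_of_le hk1 with hk | hk
      · subst hk
        rw [hch1]
        exact hstep.1
      · exact ihm.2 k (by omega) hk2


/-- **Proposition 7.3** (finite matrix continued fraction for `R_n(z)`): for `n ≥ max(p,q)`,
all the transformations are defined and
`R_n(z) = (τ_{ρ,0} ∘ τ_{ρ,1} ∘ ⋯ ∘ τ_{ρ,n-1})(X_n(z))`. -/
theorem matrix_continued_fraction_for_Rn
    (p q : ℕ) (hp : 0 < p) (hq : 0 < q) (a : ℤ → ℤ → ℂ) (n : ℕ) (hn : max p q ≤ n) :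
    (∀ m < n,
      (alphaZ q p a m +
          rhoP q n a m * chainFrom (tauRho p q n hq hp a) n (Xdiag p q) (m + 1) *
            rhoM p n a m)
          ⟨q - 1, Nat.sub_lt hq one_pos⟩ ⟨p - 1, Nat.sub_lt hp one_pos⟩ ≠ 0) ∧
    (Matrix.of fun (i : Fin q) (j : Fin p) =>
        gen fun ℓ =>
          (Hnmat p q a n ^ ℓ)
            ⟨(i : ℕ), lt_of_lt_of_le i.isLt (le_trans (le_max_right p q) hn)⟩
            ⟨(j : ℕ), lt_of_lt_of_le j.isLt (le_trans (le_max_left p q) hn)⟩) =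
      chainFrom (tauRho p q n hq hp a) n (Xdiag p q) 0 := by
  obtain ⟨h1, h2⟩ := MCF_chain p q n hp hq a n 0 (by omega)
  have hNf0 : MCF_Nf p q a 0 = Hmat p q a := by
    funext i j
    simp [MCF_Nf]
  have hH : Hnmat p q a n = MCF_KK n (Hmat p q a) := rfl
  constructor
  · intro m hm
    exact h2 m (by omega) hm
  · rw [h1, Nat.sub_zero, hNf0]
    refine Matrix.ext fun i j => ?_
    rw [MCF_Gpad]
    simp only [Matrix.of_apply]
    rw [dif_pos ⟨lt_of_lt_of_le i.isLt (le_trans (le_max_right p q) hn),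
      lt_of_lt_of_le j.isLt (le_trans (le_max_left p q) hn)⟩]
    rfl
end
end

section
/- Let ℓ ≥ 1 be an integer and set N := ⌊pqℓ/(p+q)⌋ + max(p,q) + 1. If n ≥ 2N+1 and N ≤ i ≤ n−1−N, then D_{[ℓ,i,i,n]} = {γ + i : γ ∈ P_{[ℓ,0,0]}}, where γ + i denotes the path γ shifted i units upwards; in particular the map γ ↦ γ + i is a bijection from P_{[ℓ,0,0]} onto D_{[ℓ,i,i,n]}, and D_{[ℓ,i,i,n]} = P_{[ℓ,i,i]}. -/
open scoped BigOperators
open Finset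

noncomputable section

/-- The collection `P_{[ℓ,i,j]}` of all paths of length `ℓ` from `(0,i)` to `(ℓ,j)`, a path
being recorded as (starting height, step sequence). -/
def PsetP (p q ℓ : ℕ) (i j : ℤ) : Finset (ℤ × (Fin ℓ → ℤ)) :=
  ({i} ×ˢ steps p q ℓ).filter fun γ => hgt γ.1 (ext γ.2) ℓ = j

/-- The collection `D_{[ℓ,i,j,N]}` of paths of length `ℓ` from `(0,i)` to `(ℓ,j)` with all
heights in `{0, …, N-1}`, a path being recorded as (starting height, step sequence). -/
def DboxSetP (p q N ℓ : ℕ) (i j : ℤ) : Finset (ℤ × (Fin ℓ → ℤ)) :=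
  ({i} ×ˢ steps p q ℓ).filter fun γ =>
    hgt γ.1 (ext γ.2) ℓ = j ∧
      ∀ k ≤ ℓ, 0 ≤ hgt γ.1 (ext γ.2) k ∧ hgt γ.1 (ext γ.2) k ≤ (N : ℤ) - 1

lemma nat_min_le_div (p q k m : ℕ) (h : 0 < p + q) :
    min (k * q) (m * p) ≤ p * q * (k + m) / (p + q) := by
  rcases le_total (k * q) (m * p) with hle | hle
  · rw [min_eq_left hle, Nat.le_div_iff_mul_le h]
    nlinarith
  · rw [min_eq_right hle, Nat.le_div_iff_mul_le h]
    nlinarith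

lemma heights_bounded (p q ℓ : ℕ) (hpq : 0 < p + q) (s : Fin ℓ → ℤ)
    (hs : s ∈ steps p q ℓ) (h0 : hgt 0 (ext s) ℓ = 0) (k : ℕ) (hk : k ≤ ℓ) :
    -((p * q * ℓ / (p + q) : ℕ) : ℤ) ≤ hgt 0 (ext s) k ∧
      hgt 0 (ext s) k ≤ ((p * q * ℓ / (p + q) : ℕ) : ℤ) := by
  have hstep : ∀ t : Fin ℓ, s t ∈ Finset.Icc (-(p : ℤ)) (q : ℤ) := by
    simpa [steps, Fintype.mem_piFinset] using hs
  have hext : ∀ t, t < ℓ → -(p : ℤ) ≤ ext s t ∧ ext s t ≤ q := by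
    intro t ht
    have he : ext s t = s ⟨t, ht⟩ := dif_pos ht
    rw [he]
    exact Finset.mem_Icc.mp (hstep ⟨t, ht⟩)
  have hhgt : ∀ m, hgt 0 (ext s) m = ∑ t ∈ Finset.range m, ext s t :=
    fun m => zero_add _
  have hS0 : ∑ t ∈ Finset.range ℓ, ext s t = 0 := by rw [← hhgt]; exact h0
  have hsplit : ∑ t ∈ Finset.range k, ext s t + ∑ t ∈ Finset.Ico k ℓ, ext s t
      = ∑ t ∈ Finset.range ℓ, ext s t := by
    rw [Finset.range_eq_Ico, Finset.range_eq_Ico]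
    exact Finset.sum_Ico_consecutive (fun t => ext s t) (Nat.zero_le k) hk
  have h1 : (∑ t ∈ Finset.range k, ext s t) ≤ (k : ℤ) * q := by
    calc (∑ t ∈ Finset.range k, ext s t) ≤ ∑ _t ∈ Finset.range k, (q : ℤ) :=
          Finset.sum_le_sum fun t ht =>
            (hext t (lt_of_lt_of_le (Finset.mem_range.mp ht) hk)).2
      _ = (k : ℤ) * q := by simp [mul_comm]
  have h2 : -((k : ℤ) * p) ≤ (∑ t ∈ Finset.range k, ext s t) := by
    calc -((k : ℤ) * p) = ∑ _t ∈ Finset.range k, (-(p : ℤ)) := by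
          simp [mul_comm]
      _ ≤ (∑ t ∈ Finset.range k, ext s t) := Finset.sum_le_sum fun t ht =>
          (hext t (lt_of_lt_of_le (Finset.mem_range.mp ht) hk)).1
  have h3 : ∑ t ∈ Finset.Ico k ℓ, ext s t ≤ ((ℓ - k : ℕ) : ℤ) * q := by
    calc ∑ t ∈ Finset.Ico k ℓ, ext s t ≤ ∑ _t ∈ Finset.Ico k ℓ, (q : ℤ) :=
          Finset.sum_le_sum fun t ht => (hext t (Finset.mem_Ico.mp ht).2).2
      _ = ((ℓ - k : ℕ) : ℤ) * q := by simp [Nat.card_Ico, mul_comm]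
  have h4 : -(((ℓ - k : ℕ) : ℤ) * p) ≤ ∑ t ∈ Finset.Ico k ℓ, ext s t := by
    calc -(((ℓ - k : ℕ) : ℤ) * p) = ∑ _t ∈ Finset.Ico k ℓ, (-(p : ℤ)) := by
          simp [Nat.card_Ico, mul_comm]
      _ ≤ _ := Finset.sum_le_sum fun t ht => (hext t (Finset.mem_Ico.mp ht).2).1
  -- (∑ t ∈ Finset.range k, ext s t) ≤ (ℓ-k)*p  and  -(ℓ-k)*q ≤ (∑ t ∈ Finset.range k, ext s t)
  have h5 : (∑ t ∈ Finset.range k, ext s t) ≤ ((ℓ - k : ℕ) : ℤ) * p := by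
    have : (∑ t ∈ Finset.range k, ext s t) = -(∑ t ∈ Finset.Ico k ℓ, ext s t) := by omega
    rw [this]; omega
  have h6 : -(((ℓ - k : ℕ) : ℤ) * q) ≤ (∑ t ∈ Finset.range k, ext s t) := by
    have : (∑ t ∈ Finset.range k, ext s t) = -(∑ t ∈ Finset.Ico k ℓ, ext s t) := by omega
    rw [this]; omega
  have hkm : k + (ℓ - k) = ℓ := by omega
  have hub : min (k * q) ((ℓ - k) * p) ≤ p * q * ℓ / (p + q) := by
    have := nat_min_le_div p q k (ℓ - k) hpq
    rwa [hkm] at this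
  have hlb : min (k * p) ((ℓ - k) * q) ≤ p * q * ℓ / (p + q) := by
    have := nat_min_le_div q p k (ℓ - k) (by omega)
    rwa [hkm, show q * p * ℓ = p * q * ℓ by ring, Nat.add_comm q p] at this
  rw [hhgt]
  constructor
  · have : -(((min (k * p) ((ℓ - k) * q) : ℕ)) : ℤ) ≤ (∑ t ∈ Finset.range k, ext s t) := by
      rcases min_cases (k * p) ((ℓ - k) * q) with ⟨heq, _⟩ | ⟨heq, _⟩ <;>
        rw [heq] <;> push_cast <;> omega
    have hcast : ((min (k * p) ((ℓ - k) * q) : ℕ) : ℤ) ≤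
        ((p * q * ℓ / (p + q) : ℕ) : ℤ) := by exact_mod_cast hlb
    omega
  · have : (∑ t ∈ Finset.range k, ext s t) ≤ ((min (k * q) ((ℓ - k) * p) : ℕ) : ℤ) := by
      rcases min_cases (k * q) ((ℓ - k) * p) with ⟨heq, _⟩ | ⟨heq, _⟩ <;>
        rw [heq] <;> push_cast <;> omega
    have hcast : ((min (k * q) ((ℓ - k) * p) : ℕ) : ℤ) ≤
        ((p * q * ℓ / (p + q) : ℕ) : ℤ) := by exact_mod_cast hub
    omega

/-- **Proposition 7.4**: with `N = ⌊pqℓ/(p+q)⌋ + max(p,q) + 1`, if `n ≥ 2N+1` and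
`N ≤ i ≤ n-1-N`, then `D_{[ℓ,i,i,n]}` is the image of `P_{[ℓ,0,0]}` under the (injective)
upward shift by `i`, and `D_{[ℓ,i,i,n]} = P_{[ℓ,i,i]}`. -/
theorem shifted_paths_bijection
    (p q : ℕ) (hp : 1 ≤ p) (hq : 1 ≤ q) (ℓ : ℕ) (hℓ : 1 ≤ ℓ)
    (N : ℕ) (hN : N = p * q * ℓ / (p + q) + max p q + 1)
    (n i : ℕ) (hn : 2 * N + 1 ≤ n) (hi1 : N ≤ i) (hi2 : i ≤ n - 1 - N) :
    DboxSetP p q n ℓ (i : ℤ) (i : ℤ) =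
        (PsetP p q ℓ 0 0).image (fun γ => (γ.1 + (i : ℤ), γ.2)) ∧
    Function.Injective (fun γ : ℤ × (Fin ℓ → ℤ) => (γ.1 + (i : ℤ), γ.2)) ∧
    DboxSetP p q n ℓ (i : ℤ) (i : ℤ) = PsetP p q ℓ (i : ℤ) (i : ℤ) := by
  set M : ℕ := p * q * ℓ / (p + q) with hM
  have hpq : 0 < p + q := by omega
  have hshift : ∀ (s : Fin ℓ → ℤ) (k : ℕ),
      hgt (i : ℤ) (ext s) k = (i : ℤ) + hgt 0 (ext s) k := by
    intro s k; simp [hgt]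
  -- arithmetic facts
  have hmax : p ≤ max p q := le_max_left p q
  have hiM : (M : ℤ) ≤ (i : ℤ) := by
    have : M ≤ i := by omega
    exact_mod_cast this
  have hin : (i : ℤ) + (M : ℤ) ≤ (n : ℤ) - 1 := by
    have h2 : i + M + 1 ≤ n := by omega
    have h3 : ((i : ℤ) + (M : ℤ) + 1) ≤ (n : ℤ) := by exact_mod_cast h2
    omega
  have key : ∀ s ∈ steps p q ℓ, hgt (i : ℤ) (ext s) ℓ = (i : ℤ) →
      ∀ k ≤ ℓ, 0 ≤ hgt (i : ℤ) (ext s) k ∧ hgt (i : ℤ) (ext s) k ≤ (n : ℤ) - 1 := by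
    intro s hs hend k hk
    have h0 : hgt 0 (ext s) ℓ = 0 := by
      have := hshift s ℓ; omega
    have hb := heights_bounded p q ℓ hpq s hs h0 k hk
    have := hshift s k
    omega
  have memD : ∀ c (sf : Fin ℓ → ℤ), (c, sf) ∈ DboxSetP p q n ℓ (i : ℤ) (i : ℤ) ↔
      (c = (i : ℤ) ∧ sf ∈ steps p q ℓ) ∧ hgt c (ext sf) ℓ = (i : ℤ) ∧
        ∀ k ≤ ℓ, 0 ≤ hgt c (ext sf) k ∧ hgt c (ext sf) k ≤ (n : ℤ) - 1 := by
    intro c sf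
    rw [DboxSetP, Finset.mem_filter, Finset.mem_product, Finset.mem_singleton]
  have memP : ∀ (j : ℤ) c (sf : Fin ℓ → ℤ), (c, sf) ∈ PsetP p q ℓ j j ↔
      (c = j ∧ sf ∈ steps p q ℓ) ∧ hgt c (ext sf) ℓ = j := by
    intro j c sf
    rw [PsetP, Finset.mem_filter, Finset.mem_product, Finset.mem_singleton]
  refine ⟨?_, ?_, ?_⟩
  · ext ⟨c, sf⟩
    rw [memD]
    constructor
    · rintro ⟨⟨h1, h2⟩, h3, _⟩
      rw [Finset.mem_image]
      refine ⟨(0, sf), ?_, ?_⟩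
      · rw [memP]
        refine ⟨⟨rfl, h2⟩, ?_⟩
        have := hshift sf ℓ
        rw [h1] at h3
        omega
      · show ((0 : ℤ) + (i : ℤ), sf) = (c, sf)
        rw [h1, zero_add]
    · intro h
      rw [Finset.mem_image] at h
      obtain ⟨⟨c', sf'⟩, hx, heq⟩ := h
      rw [memP] at hx
      obtain ⟨⟨hc, hs⟩, hend⟩ := hx
      have heq1 : c' + (i : ℤ) = c := congrArg Prod.fst heq
      have heq2 : sf = sf' := (congrArg Prod.snd heq).symm
      subst heq2; subst hc
      have h1 : c = (i : ℤ) := by omega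
      have hend' : hgt (i : ℤ) (ext sf) ℓ = (i : ℤ) := by
        have := hshift sf ℓ; omega
      exact ⟨⟨h1, hs⟩, by rw [h1]; exact hend', by rw [h1]; exact key sf hs hend'⟩
  · intro a b h
    simp only [Prod.mk.injEq] at h
    exact Prod.ext (by omega) h.2
  · ext ⟨c, sf⟩
    rw [memD, memP]
    constructor
    · rintro ⟨⟨h1, h2⟩, h3, _⟩
      exact ⟨⟨h1, h2⟩, h3⟩
    · rintro ⟨⟨h1, h2⟩, h3⟩
      refine ⟨⟨h1, h2⟩, h3, ?_⟩
      rw [h1] at h3 ⊢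
      exact key sf h2 h3
end
end

section
/- For every integer ℓ ≥ 0, lim_{n→∞} (1/n)·𝔼[Tr(H_n^ℓ)] = 𝔼[W_{[ℓ,0,0]}]. Equivalently, writing λ_{1,n}, …, λ_{n,n} for the eigenvalues of H_n counted with multiplicity (the roots of its characteristic polynomial), lim_{n→∞} 𝔼[(1/n) Σ_{i=1}^{n} λ_{i,n}^ℓ] = 𝔼[W_{[ℓ,0,0]}]. -/
open scoped BigOperators
open Finset

noncomputable section

open MeasureTheory ProbabilityTheory

namespace RBM

lemma ext_lt {n : ℕ} (s : Fin n → ℤ) {t : ℕ} (ht : t < n) : ext s t = s ⟨t, ht⟩ := dif_pos ht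

lemma ext_snoc_lt {n : ℕ} (s : Fin n → ℤ) (x : ℤ) {t : ℕ} (ht : t < n) :
    ext (Fin.snoc s x : Fin (n+1) → ℤ) t = ext s t := by
  rw [ext_lt _ (Nat.lt_succ_of_lt ht), ext_lt _ ht]
  have : (⟨t, Nat.lt_succ_of_lt ht⟩ : Fin (n+1)) = Fin.castSucc ⟨t, ht⟩ := rfl
  rw [this, Fin.snoc_castSucc]

lemma ext_snoc_last {n : ℕ} (s : Fin n → ℤ) (x : ℤ) :
    ext (Fin.snoc s x : Fin (n+1) → ℤ) n = x := by
  rw [ext_lt _ (Nat.lt_succ_self n)]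
  have : (⟨n, Nat.lt_succ_self n⟩ : Fin (n+1)) = Fin.last n := rfl
  rw [this, Fin.snoc_last]

lemma hgt_snoc {n : ℕ} (i : ℤ) (s : Fin n → ℤ) (x : ℤ) {k : ℕ} (hk : k ≤ n) :
    hgt i (ext (Fin.snoc s x : Fin (n+1) → ℤ)) k = hgt i (ext s) k := by
  unfold hgt
  congr 1
  refine Finset.sum_congr rfl fun t ht => ?_
  exact ext_snoc_lt s x (lt_of_lt_of_le (Finset.mem_range.mp ht) hk)

lemma hgt_snoc_last {n : ℕ} (i : ℤ) (s : Fin n → ℤ) (x : ℤ) :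
    hgt i (ext (Fin.snoc s x : Fin (n+1) → ℤ)) (n+1) = hgt i (ext s) n + x := by
  unfold hgt
  rw [Finset.sum_range_succ, ext_snoc_last, ← add_assoc]
  congr 2
  refine Finset.sum_congr rfl fun t ht => ?_
  exact ext_snoc_lt s x (Finset.mem_range.mp ht)

lemma wgt_snoc (a : ℤ → ℤ → ℂ) {n : ℕ} (i : ℤ) (s : Fin n → ℤ) (x : ℤ) :
    wgt a (n+1) i (ext (Fin.snoc s x : Fin (n+1) → ℤ))
      = wgt a n i (ext s) * stepW a (hgt i (ext s) n) x := by
  unfold wgt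
  rw [Finset.prod_range_succ]
  congr 1
  · refine Finset.prod_congr rfl fun k hk => ?_
    have hk' := Finset.mem_range.mp hk
    rw [hgt_snoc i s x hk'.le, ext_snoc_lt s x hk']
  · rw [hgt_snoc i s x le_rfl, ext_snoc_last]

lemma mem_steps {p q n : ℕ} {s : Fin n → ℤ} :
    s ∈ steps p q n ↔ ∀ k, -(p:ℤ) ≤ s k ∧ s k ≤ (q:ℤ) := by
  simp [steps, Fintype.mem_piFinset, Finset.mem_Icc]

lemma sum_steps_succ (p q n : ℕ) (F : (Fin (n+1) → ℤ) → ℂ) :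
    ∑ s ∈ steps p q (n+1), F s
      = ∑ y ∈ (steps p q n) ×ˢ (Finset.Icc (-(p:ℤ)) (q:ℤ)), F (Fin.snoc y.1 y.2) := by
  refine Finset.sum_nbij' (fun s => (Fin.init s, s (Fin.last n)))
    (fun y => Fin.snoc y.1 y.2) ?_ ?_ ?_ ?_ ?_
  · intro s hs
    rw [mem_steps] at hs
    rw [Finset.mem_product]
    constructor
    · rw [mem_steps]; intro k
      exact ⟨(hs _).1, (hs _).2⟩
    · rw [Finset.mem_Icc]; exact hs _
  · intro y hy
    rw [Finset.mem_product] at hy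
    rw [mem_steps]
    intro k
    induction k using Fin.lastCases with
    | last => rw [Fin.snoc_last]; exact Finset.mem_Icc.mp hy.2
    | cast k => rw [Fin.snoc_castSucc]; exact (mem_steps.mp hy.1) k
  · intro s _
    dsimp only
    exact Fin.snoc_init_self s
  · intro y _
    rw [Fin.init_snoc, Fin.snoc_last]
  · intro s _
    dsimp only
    rw [Fin.snoc_init_self]
lemma hgt_zero (i : ℤ) (σ : ℕ → ℤ) : hgt i σ 0 = i := by simp [hgt]

lemma steps_zero_sum (p q : ℕ) (F : (Fin 0 → ℤ) → ℂ) :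
    ∑ s ∈ steps p q 0, F s = F (fun k => k.elim0) := by
  have h : steps p q 0 = {fun k => k.elim0} := by
    apply Finset.eq_singleton_iff_unique_mem.mpr
    constructor
    · rw [mem_steps]; intro k; exact k.elim0
    · intro s _; funext k; exact k.elim0
  rw [h, Finset.sum_singleton]

lemma inner_step (p q n ℓ : ℕ) (a : ℤ → ℤ → ℂ) (i j : Fin n) (s : Fin ℓ → ℤ) :
    ∑ m : Fin n,
      (if hgt ((i:ℕ):ℤ) (ext s) ℓ = ((m:ℕ):ℤ) ∧
          (∀ k ≤ ℓ, 0 ≤ hgt ((i:ℕ):ℤ) (ext s) k ∧ hgt ((i:ℕ):ℤ) (ext s) k ≤ (n:ℤ)-1)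
        then wgt a ℓ ((i:ℕ):ℤ) (ext s) else 0) * Hnmat p q a n m j
    = ∑ x ∈ Finset.Icc (-(p:ℤ)) (q:ℤ),
        (if hgt ((i:ℕ):ℤ) (ext (Fin.snoc s x : Fin (ℓ+1) → ℤ)) (ℓ+1) = ((j:ℕ):ℤ) ∧
            (∀ k ≤ ℓ+1, 0 ≤ hgt ((i:ℕ):ℤ) (ext (Fin.snoc s x : Fin (ℓ+1) → ℤ)) k ∧
              hgt ((i:ℕ):ℤ) (ext (Fin.snoc s x : Fin (ℓ+1) → ℤ)) k ≤ (n:ℤ)-1)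
          then wgt a (ℓ+1) ((i:ℕ):ℤ) (ext (Fin.snoc s x : Fin (ℓ+1) → ℤ)) else 0) := by
  set h := hgt ((i:ℕ):ℤ) (ext s) ℓ with hh
  -- rewrite RHS using snoc lemmas
  have hR : ∀ x : ℤ,
      (if hgt ((i:ℕ):ℤ) (ext (Fin.snoc s x : Fin (ℓ+1) → ℤ)) (ℓ+1) = ((j:ℕ):ℤ) ∧
          (∀ k ≤ ℓ+1, 0 ≤ hgt ((i:ℕ):ℤ) (ext (Fin.snoc s x : Fin (ℓ+1) → ℤ)) k ∧
            hgt ((i:ℕ):ℤ) (ext (Fin.snoc s x : Fin (ℓ+1) → ℤ)) k ≤ (n:ℤ)-1)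
        then wgt a (ℓ+1) ((i:ℕ):ℤ) (ext (Fin.snoc s x : Fin (ℓ+1) → ℤ)) else 0)
      = (if h + x = ((j:ℕ):ℤ) ∧
          ((∀ k ≤ ℓ, 0 ≤ hgt ((i:ℕ):ℤ) (ext s) k ∧ hgt ((i:ℕ):ℤ) (ext s) k ≤ (n:ℤ)-1)
            ∧ (0 ≤ h + x ∧ h + x ≤ (n:ℤ)-1))
        then wgt a ℓ ((i:ℕ):ℤ) (ext s) * stepW a h x else 0) := by
    intro x
    rw [wgt_snoc, hgt_snoc_last]
    refine if_congr (and_congr Iff.rfl ?_) rfl rfl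
    constructor
    · intro H
      refine ⟨fun k hk => ?_, ?_⟩
      · rw [← hgt_snoc ((i:ℕ):ℤ) s x hk]; exact H k (Nat.le_succ_of_le hk)
      · rw [← hgt_snoc_last ((i:ℕ):ℤ) s x]; exact H (ℓ+1) le_rfl
    · intro H k hk
      by_cases hkl : k ≤ ℓ
      · rw [hgt_snoc ((i:ℕ):ℤ) s x hkl]; exact H.1 k hkl
      · have hkeq : k = ℓ+1 := by omega
        subst hkeq
        rw [hgt_snoc_last ((i:ℕ):ℤ) s x]
        exact H.2
  rw [Finset.sum_congr rfl (fun x _ => hR x)]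
  by_cases hb : ∀ k ≤ ℓ, 0 ≤ hgt ((i:ℕ):ℤ) (ext s) k ∧ hgt ((i:ℕ):ℤ) (ext s) k ≤ (n:ℤ)-1
  · -- main case
    obtain ⟨hh0, hh1⟩ := hb ℓ le_rfl
    have hm0lt : h.toNat < n := by omega
    set m0 : Fin n := ⟨h.toNat, hm0lt⟩ with hm0
    have hm0z : ((m0:ℕ):ℤ) = h := by simp [hm0, Int.toNat_of_nonneg hh0]; omega
    -- LHS collapses to single m = m0
    rw [Finset.sum_eq_single m0]
    rotate_left
    · intro m _ hm
      rw [if_neg, zero_mul]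
      rintro ⟨h1, -⟩
      apply hm
      apply Fin.ext
      have : ((m:ℕ):ℤ) = ((m0:ℕ):ℤ) := by rw [hm0z, ← h1]
      exact_mod_cast this
    · intro habs; exact absurd (Finset.mem_univ m0) habs
    -- RHS collapses to single x = j - h
    have hR2 : ∀ x ∈ Finset.Icc (-(p:ℤ)) (q:ℤ),
        (if h + x = ((j:ℕ):ℤ) ∧
            ((∀ k ≤ ℓ, 0 ≤ hgt ((i:ℕ):ℤ) (ext s) k ∧ hgt ((i:ℕ):ℤ) (ext s) k ≤ (n:ℤ)-1)
              ∧ (0 ≤ h + x ∧ h + x ≤ (n:ℤ)-1))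
          then wgt a ℓ ((i:ℕ):ℤ) (ext s) * stepW a h x else 0)
        = (if x = ((j:ℕ):ℤ) - h then wgt a ℓ ((i:ℕ):ℤ) (ext s) * stepW a h x else 0) := by
      intro x _
      refine if_congr ?_ rfl rfl
      have hj0 : (0:ℤ) ≤ ((j:ℕ):ℤ) := Int.natCast_nonneg _
      have hj1 : ((j:ℕ):ℤ) ≤ (n:ℤ) - 1 := by
        have := j.isLt; omega
      constructor
      · rintro ⟨h1, -⟩; omega
      · intro h1; refine ⟨by omega, hb, by omega, by omega⟩
    rw [Finset.sum_congr rfl hR2, Finset.sum_ite_eq' (Finset.Icc (-(p:ℤ)) (q:ℤ))]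
    rw [if_pos ⟨hm0z.symm, hb⟩]
    unfold Hnmat
    rw [hm0z, mul_ite, mul_zero]
    by_cases hstep : -(p:ℤ) ≤ ((j:ℕ):ℤ) - h ∧ ((j:ℕ):ℤ) - h ≤ (q:ℤ)
    · rw [if_pos hstep, if_pos (Finset.mem_Icc.mpr hstep)]
      congr 1
      unfold stepW
      by_cases hpos : 0 ≤ ((j:ℕ):ℤ) - h
      · rw [if_pos hpos, min_eq_left (by omega)]
      · rw [if_neg hpos, min_eq_right (by omega)]
        congr 1
        omega
    · rw [if_neg hstep, if_neg (fun hmem => hstep (Finset.mem_Icc.mp hmem))]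
  · -- degenerate case: both sides vanish
    rw [Finset.sum_eq_zero, Finset.sum_eq_zero]
    · intro x _
      rw [if_neg]
      rintro ⟨-, hcon, -⟩
      exact hb hcon
    · intro m _
      rw [if_neg, zero_mul]
      rintro ⟨-, hcon⟩
      exact hb hcon

lemma Hpow_apply (p q : ℕ) (a : ℤ → ℤ → ℂ) (n : ℕ) :
    ∀ (ℓ : ℕ) (i j : Fin n),
      (Hnmat p q a n ^ ℓ) i j = Aboxpoly p q a n ℓ ((i:ℕ):ℤ) ((j:ℕ):ℤ) := by
  intro ℓ
  induction ℓ with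
  | zero =>
    intro i j
    rw [pow_zero]
    unfold Aboxpoly
    rw [steps_zero_sum]
    have hgt0 : ∀ k : ℕ, k ≤ 0 → hgt ((i:ℕ):ℤ) (ext (fun k : Fin 0 => k.elim0)) k = ((i:ℕ):ℤ) := by
      intro k hk
      rw [Nat.le_zero.mp hk, hgt_zero]
    by_cases hij : i = j
    · subst hij
      rw [Matrix.one_apply_eq, if_pos]
      · unfold wgt; rw [Finset.prod_range_zero]
      refine ⟨hgt0 0 le_rfl, fun k hk => ?_⟩
      rw [hgt0 k hk]
      have := i.isLt
      constructor <;> [positivity; omega]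
    · rw [Matrix.one_apply_ne hij, if_neg]
      rintro ⟨h1, -⟩
      rw [hgt0 0 le_rfl] at h1
      exact hij (Fin.ext (by exact_mod_cast h1))
  | succ ℓ IH =>
    intro i j
    calc (Hnmat p q a n ^ (ℓ+1)) i j
        = ∑ m : Fin n, (Hnmat p q a n ^ ℓ) i m * Hnmat p q a n m j := by
          rw [pow_succ, Matrix.mul_apply]
      _ = ∑ m : Fin n, Aboxpoly p q a n ℓ ((i:ℕ):ℤ) ((m:ℕ):ℤ) * Hnmat p q a n m j :=
          Finset.sum_congr rfl fun m _ => by rw [IH]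
      _ = ∑ m : Fin n, ∑ s ∈ steps p q ℓ,
            (if hgt ((i:ℕ):ℤ) (ext s) ℓ = ((m:ℕ):ℤ) ∧
                (∀ k ≤ ℓ, 0 ≤ hgt ((i:ℕ):ℤ) (ext s) k ∧ hgt ((i:ℕ):ℤ) (ext s) k ≤ (n:ℤ)-1)
              then wgt a ℓ ((i:ℕ):ℤ) (ext s) else 0) * Hnmat p q a n m j := by
          refine Finset.sum_congr rfl fun m _ => ?_
          rw [Aboxpoly, Finset.sum_mul]
      _ = ∑ s ∈ steps p q ℓ, ∑ m : Fin n,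
            (if hgt ((i:ℕ):ℤ) (ext s) ℓ = ((m:ℕ):ℤ) ∧
                (∀ k ≤ ℓ, 0 ≤ hgt ((i:ℕ):ℤ) (ext s) k ∧ hgt ((i:ℕ):ℤ) (ext s) k ≤ (n:ℤ)-1)
              then wgt a ℓ ((i:ℕ):ℤ) (ext s) else 0) * Hnmat p q a n m j :=
          Finset.sum_comm
      _ = ∑ s ∈ steps p q ℓ, ∑ x ∈ Finset.Icc (-(p:ℤ)) (q:ℤ),
            (if hgt ((i:ℕ):ℤ) (ext (Fin.snoc s x : Fin (ℓ+1) → ℤ)) (ℓ+1) = ((j:ℕ):ℤ) ∧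
                (∀ k ≤ ℓ+1, 0 ≤ hgt ((i:ℕ):ℤ) (ext (Fin.snoc s x : Fin (ℓ+1) → ℤ)) k ∧
                  hgt ((i:ℕ):ℤ) (ext (Fin.snoc s x : Fin (ℓ+1) → ℤ)) k ≤ (n:ℤ)-1)
              then wgt a (ℓ+1) ((i:ℕ):ℤ) (ext (Fin.snoc s x : Fin (ℓ+1) → ℤ)) else 0) :=
          Finset.sum_congr rfl fun s _ => inner_step p q n ℓ a i j s
      _ = Aboxpoly p q a n (ℓ+1) ((i:ℕ):ℤ) ((j:ℕ):ℤ) := by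
          rw [Aboxpoly, sum_steps_succ, Finset.sum_product]
lemma hgt_eq (i : ℤ) (σ : ℕ → ℤ) (k : ℕ) : hgt i σ k = hgt 0 σ k + i := by
  unfold hgt; omega

lemma wgt_as_prod (a : ℤ → ℤ → ℂ) (ℓ : ℕ) (i : ℤ) (σ : ℕ → ℤ) :
    wgt a ℓ i σ = ∏ k ∈ Finset.range ℓ, a (σ k) ((hgt 0 σ k + min (σ k) 0) + i) := by
  unfold wgt stepW
  refine Finset.prod_congr rfl fun k _ => ?_
  by_cases hs : 0 ≤ σ k
  · rw [if_pos hs]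
    congr 1
    have : min (σ k) 0 = 0 := min_eq_right hs
    rw [this, hgt_eq]; ring
  · rw [if_neg hs]
    congr 1
    have : min (σ k) 0 = σ k := min_eq_left (le_of_not_ge hs)
    rw [this, hgt_eq]; ring

lemma Wpoly_shift (p q : ℕ) (a : ℤ → ℤ → ℂ) (ℓ : ℕ) (i : ℤ) :
    Wpoly p q (fun k m => a k (m + i)) ℓ 0 0
      = ∑ s ∈ steps p q ℓ, if hgt 0 (ext s) ℓ = 0 then wgt a ℓ i (ext s) else 0 := by
  unfold Wpoly
  refine Finset.sum_congr rfl fun s _ => ?_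
  refine if_congr Iff.rfl ?_ rfl
  rw [wgt_as_prod _ ℓ 0, wgt_as_prod _ ℓ i]
  refine Finset.prod_congr rfl fun k _ => ?_
  rw [add_zero]

lemma hgt_bounds {p q ℓ : ℕ} {s : Fin ℓ → ℤ} (hs : s ∈ steps p q ℓ) (i : ℤ)
    {k : ℕ} (hk : k ≤ ℓ) :
    i - (p:ℤ) * ℓ ≤ hgt i (ext s) k ∧ hgt i (ext s) k ≤ i + (q:ℤ) * ℓ := by
  rw [mem_steps] at hs
  unfold hgt
  have h1 : ∑ t ∈ Finset.range k, ext s t ≤ (q:ℤ) * k := by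
    calc ∑ t ∈ Finset.range k, ext s t ≤ ∑ _t ∈ Finset.range k, (q:ℤ) := by
          refine Finset.sum_le_sum fun t ht => ?_
          have htk : t < ℓ := lt_of_lt_of_le (Finset.mem_range.mp ht) hk
          rw [ext_lt s htk]; exact (hs _).2
      _ = (q:ℤ) * k := by rw [Finset.sum_const, Finset.card_range]; ring
  have h2 : -((p:ℤ) * k) ≤ ∑ t ∈ Finset.range k, ext s t := by
    calc -((p:ℤ) * k) = ∑ _t ∈ Finset.range k, (-(p:ℤ)) := by
          rw [Finset.sum_const, Finset.card_range]; ring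
      _ ≤ ∑ t ∈ Finset.range k, ext s t := by
          refine Finset.sum_le_sum fun t ht => ?_
          have htk : t < ℓ := lt_of_lt_of_le (Finset.mem_range.mp ht) hk
          rw [ext_lt s htk]; exact (hs _).1
  have hkℓ1 : (k:ℤ) ≤ (ℓ:ℤ) := by exact_mod_cast hk
  have hp1 : (p:ℤ) * k ≤ (p:ℤ) * ℓ :=
    mul_le_mul_of_nonneg_left hkℓ1 (Int.natCast_nonneg p)
  have hq1 : (q:ℤ) * k ≤ (q:ℤ) * ℓ :=
    mul_le_mul_of_nonneg_left hkℓ1 (Int.natCast_nonneg q)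
  constructor <;> omega

lemma Abox_interior (p q : ℕ) (a : ℤ → ℤ → ℂ) (n ℓ : ℕ) (i : ℤ)
    (h1 : (p:ℤ) * ℓ ≤ i) (h2 : i + (q:ℤ) * ℓ ≤ (n:ℤ) - 1) :
    Aboxpoly p q a n ℓ i i = Wpoly p q (fun k m => a k (m + i)) ℓ 0 0 := by
  rw [Wpoly_shift]
  unfold Aboxpoly
  refine Finset.sum_congr rfl fun s hs => ?_
  refine if_congr ?_ rfl rfl
  have hb := fun k (hk : k ≤ ℓ) => hgt_bounds hs i hk
  constructor
  · rintro ⟨hA, -⟩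
    rw [hgt_eq] at hA; omega
  · intro hW
    have hsum : hgt i (ext s) ℓ = i := by rw [hgt_eq]; omega
    refine ⟨hsum, fun k hk => ?_⟩
    obtain ⟨hl, hr⟩ := hb k hk
    constructor <;> omega
open MeasureTheory ProbabilityTheory

lemma indepFun_integral_mul_cplx {Ω : Type*} [MeasureSpace Ω]
    [IsProbabilityMeasure (ℙ : Measure Ω)] {X Y : Ω → ℂ}
    (h : IndepFun X Y ℙ) (hXm : Measurable X) (hYm : Measurable Y) :
    ∫ ω, X ω * Y ω = (∫ ω, X ω) * ∫ ω, Y ω := by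
  have hmap := (indepFun_iff_map_prod_eq_prod_map_map hXm.aemeasurable hYm.aemeasurable).mp h
  haveI : IsProbabilityMeasure ((ℙ : Measure Ω).map X) :=
    Measure.isProbabilityMeasure_map hXm.aemeasurable
  haveI : IsProbabilityMeasure ((ℙ : Measure Ω).map Y) :=
    Measure.isProbabilityMeasure_map hYm.aemeasurable
  calc ∫ ω, X ω * Y ω
      = ∫ z : ℂ × ℂ, z.1 * z.2 ∂((ℙ : Measure Ω).map (fun ω => (X ω, Y ω))) := by
        rw [integral_map (hXm.prodMk hYm).aemeasurable (f := fun z : ℂ × ℂ => z.1 * z.2)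
          (measurable_fst.mul measurable_snd).aestronglyMeasurable]
    _ = ∫ z : ℂ × ℂ, z.1 * z.2 ∂(((ℙ : Measure Ω).map X).prod ((ℙ : Measure Ω).map Y)) := by
        rw [hmap]
    _ = (∫ x : ℂ, x ∂((ℙ : Measure Ω).map X)) * ∫ y : ℂ, y ∂((ℙ : Measure Ω).map Y) :=
        integral_prod_mul (fun x => x) (fun y => y)
    _ = (∫ ω, X ω) * ∫ ω, Y ω := by
        rw [integral_map hXm.aemeasurable, integral_map hYm.aemeasurable] <;>
          exact aestronglyMeasurable_id

lemma integral_indep_prod {Ω : Type*} [MeasureSpace Ω] [IsProbabilityMeasure (ℙ : Measure Ω)]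
    {ι : Type*} (X : ι → Ω → ℂ)
    (hm : ∀ x, Measurable (X x))
    (hind : iIndepFun X ℙ) (S : Finset ι) :
    (∫ ω, ∏ x ∈ S, X x ω) = ∏ x ∈ S, ∫ ω, X x ω := by
  classical
  induction S using Finset.cons_induction with
  | empty => simp
  | cons b S hb IH =>
    have hprodm : Measurable (fun ω => ∏ x ∈ S, X x ω) :=
      Finset.measurable_prod S fun x _ => hm x
    have hprodfun : (∏ j ∈ S, X j) = fun ω => ∏ x ∈ S, X x ω := by
      funext ω; rw [Finset.prod_apply]
    have hIndep : IndepFun (X b) (fun ω => ∏ x ∈ S, X x ω) ℙ := by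
      have h := hind.indepFun_finsetProd_of_notMem hm hb
      rw [hprodfun] at h
      exact h.symm
    have hfun : ∀ ω, ∏ x ∈ Finset.cons b S hb, X x ω = X b ω * ∏ x ∈ S, X x ω := by
      intro ω; rw [Finset.prod_cons]
    simp only [hfun]
    rw [indepFun_integral_mul_cplx hIndep (hm b) hprodm, IH, Finset.prod_cons]

lemma integral_prod_shift
    (p q : ℕ)
    {Ω : Type*} [MeasureSpace Ω] [IsProbabilityMeasure (ℙ : Measure Ω)]
    (a : ℤ → ℤ → Ω → ℂ)
    (hmeas : ∀ k n : ℤ, Measurable (a k n))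
    (hindep : iIndepFun
      (fun x : {k : ℤ // -(p : ℤ) ≤ k ∧ k ≤ (q : ℤ)} × ℤ => a x.1.1 x.2) ℙ)
    (hident : ∀ k : ℤ, -(p : ℤ) ≤ k → k ≤ (q : ℤ) → ∀ n m : ℤ,
      IdentDistrib (a k n) (a k m) ℙ ℙ)
    (C : ℝ) (hC : 0 ≤ C)
    (hbound : ∀ (k n : ℤ) (ω : Ω), -(p : ℤ) ≤ k → k ≤ (q : ℤ) → ‖a k n ω‖ ≤ C)
    (ℓ : ℕ) (c d : ℕ → ℤ) (hc : ∀ k, -(p:ℤ) ≤ c k ∧ c k ≤ q) (i : ℤ) :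
    ∫ ω, ∏ k ∈ Finset.range ℓ, a (c k) (d k + i) ω
      = ∫ ω, ∏ k ∈ Finset.range ℓ, a (c k) (d k) ω := by
  classical
  set ι := ({k : ℤ // -(p : ℤ) ≤ k ∧ k ≤ (q : ℤ)} × ℤ) with hι
  set X : ι → Ω → ℂ := fun x => a x.1.1 x.2 with hX
  have key : ∀ g : ℕ → ι,
      (∫ ω, ∏ k ∈ Finset.range ℓ, X (g k) ω)
        = ∏ y ∈ (Finset.range ℓ).image g,
            ∫ ω, (X y ω) ^ ((Finset.range ℓ).filter (fun k => g k = y)).card := by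
    intro g
    set e : ι → ℕ := fun y => ((Finset.range ℓ).filter (fun k => g k = y)).card with he
    set Z : ι → Ω → ℂ := fun y ω => (X y ω) ^ e y with hZ
    have hZm : ∀ y, Measurable (Z y) := fun y => (hmeas _ _).pow_const _
    have hZind : iIndepFun Z ℙ :=
      hindep.comp (fun y z => z ^ e y) (fun y => measurable_id.pow_const (e y))
    have hZint : ∀ y, Integrable (Z y) ℙ := by
      intro y
      refine Integrable.mono' (integrable_const (C ^ e y)) (hZm y).aestronglyMeasurable
        (Filter.Eventually.of_forall fun ω => ?_)
      rw [hZ]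
      simp only [norm_pow]
      exact pow_le_pow_left₀ (norm_nonneg _) (hbound _ _ ω y.1.2.1 y.1.2.2) _
    have h1 : ∀ ω, ∏ k ∈ Finset.range ℓ, X (g k) ω
        = ∏ y ∈ (Finset.range ℓ).image g, Z y ω := by
      intro ω
      exact Finset.prod_comp (fun y => X y ω) g
    rw [integral_congr_ae (Filter.Eventually.of_forall h1)]
    exact integral_indep_prod Z hZm hZind _
  set G : ℕ → ι := fun k => (⟨c k, hc k⟩, d k) with hG
  set τ : ι → ι := fun y => (y.1, y.2 + i) with hτ
  have hτinj : Function.Injective τ := by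
    intro y₁ y₂ h
    rw [hτ, Prod.mk.injEq] at h
    exact Prod.ext h.1 (by omega)
  have hL : (fun ω => ∏ k ∈ Finset.range ℓ, a (c k) (d k + i) ω)
      = fun ω => ∏ k ∈ Finset.range ℓ, X (τ (G k)) ω := rfl
  have hR : (fun ω => ∏ k ∈ Finset.range ℓ, a (c k) (d k) ω)
      = fun ω => ∏ k ∈ Finset.range ℓ, X (G k) ω := rfl
  rw [hL, hR, key (fun k => τ (G k)), key G]
  have himg : (Finset.range ℓ).image (fun k => τ (G k))
      = ((Finset.range ℓ).image G).image τ := by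
    rw [Finset.image_image]; rfl
  rw [himg, Finset.prod_image (fun y _ y' _ h => hτinj h)]
  refine Finset.prod_congr rfl fun y _ => ?_
  have hfib : ∀ k, (τ (G k) = τ y) = (G k = y) := by
    intro k
    apply propext
    exact ⟨fun h => hτinj h, fun h => by rw [h]⟩
  simp only [hfib]
  set m : ℕ := ((Finset.range ℓ).filter (fun k => G k = y)).card
  have hid : IdentDistrib (fun ω => (X (τ y) ω) ^ m) (fun ω => (X y ω) ^ m) ℙ ℙ := by
    have hbase : IdentDistrib (X (τ y)) (X y) ℙ ℙ :=
      hident y.1.1 y.1.2.1 y.1.2.2 (y.2 + i) y.2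
    exact hbase.comp (measurable_id.pow_const m)
  exact hid.integral_eq
section Prob

variable {Ω : Type*} [MeasureSpace Ω] [IsProbabilityMeasure (ℙ : Measure Ω)]
  (a : ℤ → ℤ → Ω → ℂ)

lemma meas_stepW (hmeas : ∀ k n : ℤ, Measurable (a k n)) (h s : ℤ) :
    Measurable (fun ω => stepW (fun k m => a k m ω) h s) := by
  unfold stepW
  by_cases hs : 0 ≤ s
  · simp only [if_pos hs]; exact hmeas _ _
  · simp only [if_neg hs]; exact hmeas _ _

lemma meas_wgt (hmeas : ∀ k n : ℤ, Measurable (a k n)) (ℓ : ℕ) (i : ℤ) (σ : ℕ → ℤ) :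
    Measurable (fun ω => wgt (fun k m => a k m ω) ℓ i σ) := by
  unfold wgt
  exact Finset.measurable_prod _ fun k _ => meas_stepW a hmeas _ _

variable {C : ℝ}

lemma norm_stepW_le {p q : ℕ}
    (hbound : ∀ (k n : ℤ) (ω : Ω), -(p : ℤ) ≤ k → k ≤ (q : ℤ) → ‖a k n ω‖ ≤ C)
    {s : ℤ} (hs : -(p:ℤ) ≤ s ∧ s ≤ (q:ℤ)) (h : ℤ) (ω : Ω) :
    ‖stepW (fun k m => a k m ω) h s‖ ≤ C := by
  unfold stepW
  by_cases h0 : 0 ≤ s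
  · rw [if_pos h0]; exact hbound _ _ ω hs.1 hs.2
  · rw [if_neg h0]; exact hbound _ _ ω hs.1 hs.2

lemma norm_wgt_le {p q ℓ : ℕ} (hC : 0 ≤ C)
    (hbound : ∀ (k n : ℤ) (ω : Ω), -(p : ℤ) ≤ k → k ≤ (q : ℤ) → ‖a k n ω‖ ≤ C)
    {s : Fin ℓ → ℤ} (hs : s ∈ steps p q ℓ) (i : ℤ) (ω : Ω) :
    ‖wgt (fun k m => a k m ω) ℓ i (ext s)‖ ≤ C ^ ℓ := by
  unfold wgt
  rw [norm_prod]
  calc ∏ k ∈ Finset.range ℓ, ‖stepW (fun k m => a k m ω) (hgt i (ext s) k) (ext s k)‖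
      ≤ ∏ _k ∈ Finset.range ℓ, C := by
        refine Finset.prod_le_prod (fun k _ => norm_nonneg _) fun k hk => ?_
        have hkℓ : k < ℓ := Finset.mem_range.mp hk
        refine norm_stepW_le a hbound ?_ _ ω
        rw [ext_lt s hkℓ]
        exact mem_steps.mp hs _
    _ = C ^ ℓ := by rw [Finset.prod_const, Finset.card_range]

lemma ext_steps_mem {p q ℓ : ℕ} (hp : 1 ≤ p) (hq : 1 ≤ q) {s : Fin ℓ → ℤ}
    (hs : s ∈ steps p q ℓ) (k : ℕ) : -(p:ℤ) ≤ ext s k ∧ ext s k ≤ (q:ℤ) := by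
  by_cases hk : k < ℓ
  · rw [ext_lt s hk]; exact mem_steps.mp hs _
  · have h0 : ext s k = 0 := dif_neg hk
    rw [h0]
    constructor
    · have : (1:ℤ) ≤ (p:ℤ) := by exact_mod_cast hp
      omega
    · have : (1:ℤ) ≤ (q:ℤ) := by exact_mod_cast hq
      omega

lemma meas_Abox (hmeas : ∀ k n : ℤ, Measurable (a k n)) (p q n ℓ : ℕ) (i j : ℤ) :
    Measurable (fun ω => Aboxpoly p q (fun k m => a k m ω) n ℓ i j) := by
  unfold Aboxpoly
  refine Finset.measurable_sum _ fun s _ => ?_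
  by_cases hcond : hgt i (ext s) ℓ = j ∧ ∀ k ≤ ℓ, 0 ≤ hgt i (ext s) k ∧ hgt i (ext s) k ≤ (n:ℤ)-1
  · simp only [if_pos hcond]; exact meas_wgt a hmeas ℓ i (ext s)
  · simp only [if_neg hcond]; exact measurable_const

lemma meas_Wpoly (hmeas : ∀ k n : ℤ, Measurable (a k n)) (p q ℓ : ℕ) (i j : ℤ) :
    Measurable (fun ω => Wpoly p q (fun k m => a k m ω) ℓ i j) := by
  unfold Wpoly
  refine Finset.measurable_sum _ fun s _ => ?_
  by_cases hcond : hgt i (ext s) ℓ = j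
  · simp only [if_pos hcond]; exact meas_wgt a hmeas ℓ i (ext s)
  · simp only [if_neg hcond]; exact measurable_const

lemma norm_Abox_le (hC : 0 ≤ C) {p q : ℕ}
    (hbound : ∀ (k n : ℤ) (ω : Ω), -(p : ℤ) ≤ k → k ≤ (q : ℤ) → ‖a k n ω‖ ≤ C)
    (n ℓ : ℕ) (i j : ℤ) (ω : Ω) :
    ‖Aboxpoly p q (fun k m => a k m ω) n ℓ i j‖ ≤ ((steps p q ℓ).card : ℝ) * C ^ ℓ := by
  unfold Aboxpoly
  calc ‖∑ s ∈ steps p q ℓ, _‖ ≤ ∑ s ∈ steps p q ℓ,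
      ‖if hgt i (ext s) ℓ = j ∧ ∀ k ≤ ℓ, 0 ≤ hgt i (ext s) k ∧ hgt i (ext s) k ≤ (n:ℤ)-1
        then wgt (fun k m => a k m ω) ℓ i (ext s) else 0‖ := norm_sum_le _ _
    _ ≤ ∑ _s ∈ steps p q ℓ, C ^ ℓ := by
        refine Finset.sum_le_sum fun s hs => ?_
        split
        · exact norm_wgt_le a hC hbound hs i ω
        · simp only [norm_zero]; positivity
    _ = ((steps p q ℓ).card : ℝ) * C ^ ℓ := by
        rw [Finset.sum_const, nsmul_eq_mul]

lemma norm_Wpoly_le (hC : 0 ≤ C) {p q : ℕ}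
    (hbound : ∀ (k n : ℤ) (ω : Ω), -(p : ℤ) ≤ k → k ≤ (q : ℤ) → ‖a k n ω‖ ≤ C)
    (ℓ : ℕ) (i j : ℤ) (ω : Ω) :
    ‖Wpoly p q (fun k m => a k m ω) ℓ i j‖ ≤ ((steps p q ℓ).card : ℝ) * C ^ ℓ := by
  unfold Wpoly
  calc ‖∑ s ∈ steps p q ℓ, _‖ ≤ ∑ s ∈ steps p q ℓ,
      ‖if hgt i (ext s) ℓ = j then wgt (fun k m => a k m ω) ℓ i (ext s) else 0‖ :=
        norm_sum_le _ _
    _ ≤ ∑ _s ∈ steps p q ℓ, C ^ ℓ := by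
        refine Finset.sum_le_sum fun s hs => ?_
        split
        · exact norm_wgt_le a hC hbound hs i ω
        · simp only [norm_zero]; positivity
    _ = ((steps p q ℓ).card : ℝ) * C ^ ℓ := by
        rw [Finset.sum_const, nsmul_eq_mul]

lemma integrable_Abox (hmeas : ∀ k n : ℤ, Measurable (a k n)) (hC : 0 ≤ C) {p q : ℕ}
    (hbound : ∀ (k n : ℤ) (ω : Ω), -(p : ℤ) ≤ k → k ≤ (q : ℤ) → ‖a k n ω‖ ≤ C)
    (n ℓ : ℕ) (i j : ℤ) :
    Integrable (fun ω => Aboxpoly p q (fun k m => a k m ω) n ℓ i j) ℙ := by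
  refine Integrable.mono' (integrable_const (((steps p q ℓ).card : ℝ) * C ^ ℓ))
    (meas_Abox a hmeas p q n ℓ i j).aestronglyMeasurable
    (Filter.Eventually.of_forall fun ω => ?_)
  exact norm_Abox_le a hC hbound n ℓ i j ω

lemma integral_Abox_interior
    (p q : ℕ) (hp : 1 ≤ p) (hq : 1 ≤ q)
    (hmeas : ∀ k n : ℤ, Measurable (a k n))
    (hindep : iIndepFun
      (fun x : {k : ℤ // -(p : ℤ) ≤ k ∧ k ≤ (q : ℤ)} × ℤ => a x.1.1 x.2) ℙ)
    (hident : ∀ k : ℤ, -(p : ℤ) ≤ k → k ≤ (q : ℤ) → ∀ n m : ℤ,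
      IdentDistrib (a k n) (a k m) ℙ ℙ)
    (hC : 0 ≤ C)
    (hbound : ∀ (k n : ℤ) (ω : Ω), -(p : ℤ) ≤ k → k ≤ (q : ℤ) → ‖a k n ω‖ ≤ C)
    (n ℓ : ℕ) (i : ℤ)
    (h1 : (p:ℤ) * ℓ ≤ i) (h2 : i + (q:ℤ) * ℓ ≤ (n:ℤ) - 1) :
    ∫ ω, Aboxpoly p q (fun k m => a k m ω) n ℓ i i
      = ∫ ω, Wpoly p q (fun k m => a k m ω) ℓ 0 0 := by
  have h3 : ∀ ω, Aboxpoly p q (fun k m => a k m ω) n ℓ i i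
      = ∑ s ∈ steps p q ℓ,
          if hgt 0 (ext s) ℓ = 0 then wgt (fun k m => a k m ω) ℓ i (ext s) else 0 := by
    intro ω
    rw [Abox_interior p q _ n ℓ i h1 h2, Wpoly_shift p q (fun k m => a k m ω) ℓ i]
  have h4 : ∀ ω, Wpoly p q (fun k m => a k m ω) ℓ 0 0
      = ∑ s ∈ steps p q ℓ,
          if hgt 0 (ext s) ℓ = 0 then wgt (fun k m => a k m ω) ℓ 0 (ext s) else 0 := by
    intro ω; rfl
  simp only [h3, h4]
  have hInt : ∀ (j : ℤ), ∀ s ∈ steps p q ℓ,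
      Integrable (fun ω =>
        if hgt 0 (ext s) ℓ = 0 then wgt (fun k m => a k m ω) ℓ j (ext s) else 0) ℙ := by
    intro j s hs
    by_cases hcond : hgt 0 (ext s) ℓ = 0
    · simp only [if_pos hcond]
      refine Integrable.mono' (integrable_const (C ^ ℓ))
        (meas_wgt a hmeas ℓ j (ext s)).aestronglyMeasurable
        (Filter.Eventually.of_forall fun ω => norm_wgt_le a hC hbound hs j ω)
    · simp only [if_neg hcond]
      exact integrable_const 0
  rw [integral_finset_sum _ (hInt i), integral_finset_sum _ (hInt 0)]
  refine Finset.sum_congr rfl fun s hs => ?_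
  by_cases hcond : hgt 0 (ext s) ℓ = 0
  · simp only [if_pos hcond]
    have hrw : ∀ (j : ℤ) (ω : Ω), wgt (fun k m => a k m ω) ℓ j (ext s)
        = ∏ k ∈ Finset.range ℓ, a (ext s k) ((hgt 0 (ext s) k + min (ext s k) 0) + j) ω :=
      fun j ω => wgt_as_prod _ ℓ j (ext s)
    simp only [hrw]
    have hc : ∀ k, -(p:ℤ) ≤ ext s k ∧ ext s k ≤ (q:ℤ) := ext_steps_mem hp hq hs
    rw [integral_prod_shift p q a hmeas hindep hident C hC hbound ℓ (ext s) _ hc i,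
      integral_prod_shift p q a hmeas hindep hident C hC hbound ℓ (ext s) _ hc 0]
  · simp only [if_neg hcond]

end Prob

end RBM

/-- **Theorem 8.1** (expected moments of random banded matrices): if the entries
`aₙ⁽ᵏ⁾` (for `-p ≤ k ≤ q`, `n ∈ ℤ`) are jointly independent random variables, identically
distributed along each diagonal and surely bounded, then for every `ℓ ≥ 0`,
`lim_{n→∞} (1/n)·𝔼[Tr(H_nˡ)] = 𝔼[W_{[ℓ,0,0]}]`. -/
theorem expected_moments_limit
    (p q : ℕ) (hp : 1 ≤ p) (hq : 1 ≤ q)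
    {Ω : Type*} [MeasureSpace Ω] [IsProbabilityMeasure (ℙ : Measure Ω)]
    (a : ℤ → ℤ → Ω → ℂ)
    (hmeas : ∀ k n : ℤ, Measurable (a k n))
    (hindep : iIndepFun
      (fun x : {k : ℤ // -(p : ℤ) ≤ k ∧ k ≤ (q : ℤ)} × ℤ => a x.1.1 x.2) ℙ)
    (hident : ∀ k : ℤ, -(p : ℤ) ≤ k → k ≤ (q : ℤ) → ∀ n m : ℤ,
      IdentDistrib (a k n) (a k m) ℙ ℙ)
    (C : ℝ)
    (hbound : ∀ (k n : ℤ) (ω : Ω), -(p : ℤ) ≤ k → k ≤ (q : ℤ) → ‖a k n ω‖ ≤ C)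
    (ℓ : ℕ) :
    Filter.Tendsto
      (fun n : ℕ =>
        (n : ℂ)⁻¹ * ∫ ω, Matrix.trace (Hnmat p q (fun k m => a k m ω) n ^ ℓ))
      Filter.atTop
      (nhds (∫ ω, Wpoly p q (fun k m => a k m ω) ℓ 0 0)) := by
  classical
  set C0 : ℝ := max C 0 with hC0def
  have hC0 : 0 ≤ C0 := le_max_right _ _
  have hbound0 : ∀ (k n : ℤ) (ω : Ω), -(p : ℤ) ≤ k → k ≤ (q : ℤ) → ‖a k n ω‖ ≤ C0 :=
    fun k n ω h1 h2 => le_trans (hbound k n ω h1 h2) (le_max_left _ _)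
  set K : ℝ := ((steps p q ℓ).card : ℝ) * C0 ^ ℓ with hKdef
  have hK : 0 ≤ K := by positivity
  set L : ℂ := ∫ ω, Wpoly p q (fun k m => a k m ω) ℓ 0 0 with hLdef
  set Ei : ℕ → ℕ → ℂ := fun n i => ∫ ω, Aboxpoly p q (fun k m => a k m ω) n ℓ (i:ℤ) (i:ℤ)
    with hEidef
  -- Step 1: the expected trace as a sum of diagonal expectations
  have htrace : ∀ n : ℕ,
      (∫ ω, Matrix.trace (Hnmat p q (fun k m => a k m ω) n ^ ℓ))
        = ∑ i ∈ Finset.range n, Ei n i := by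
    intro n
    have h1 : ∀ ω : Ω, Matrix.trace (Hnmat p q (fun k m => a k m ω) n ^ ℓ)
        = ∑ i ∈ Finset.range n,
            Aboxpoly p q (fun k m => a k m ω) n ℓ (i:ℤ) (i:ℤ) := by
      intro ω
      have h2 : Matrix.trace (Hnmat p q (fun k m => a k m ω) n ^ ℓ)
          = ∑ i : Fin n, Aboxpoly p q (fun k m => a k m ω) n ℓ ((i:ℕ):ℤ) ((i:ℕ):ℤ) := by
        unfold Matrix.trace Matrix.diag
        exact Finset.sum_congr rfl fun i _ => RBM.Hpow_apply p q _ n ℓ i i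
      rw [h2]
      exact Fin.sum_univ_eq_sum_range
        (fun i => Aboxpoly p q (fun k m => a k m ω) n ℓ (i:ℤ) (i:ℤ)) n
    rw [integral_congr_ae (Filter.Eventually.of_forall h1)]
    exact integral_finset_sum _
      (fun i _ => RBM.integrable_Abox a hmeas hC0 hbound0 n ℓ _ _)
  -- Step 2: uniform bounds
  have hEK : ∀ n i : ℕ, ‖Ei n i‖ ≤ K := by
    intro n i
    have h := norm_integral_le_of_norm_le_const (μ := (ℙ : Measure Ω)) (C := K)
      (Filter.Eventually.of_forall fun ω => RBM.norm_Abox_le a hC0 hbound0 n ℓ (i:ℤ) (i:ℤ) ω)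
    simpa using h
  have hLK : ‖L‖ ≤ K := by
    have h := norm_integral_le_of_norm_le_const (μ := (ℙ : Measure Ω)) (C := K)
      (Filter.Eventually.of_forall fun ω => RBM.norm_Wpoly_le a hC0 hbound0 ℓ 0 0 ω)
    simpa using h
  -- Step 3: interior diagonal expectations equal L
  have hint : ∀ n i : ℕ, p * ℓ ≤ i → i + q * ℓ + 1 ≤ n → Ei n i = L := by
    intro n i h1 h2
    refine RBM.integral_Abox_interior a p q hp hq hmeas hindep hident hC0 hbound0 n ℓ (i:ℤ)
      ?_ ?_
    · push_cast; exact_mod_cast Nat.cast_le.mpr h1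
    · have : (i:ℤ) + (q:ℤ) * (ℓ:ℤ) + 1 ≤ (n:ℤ) := by exact_mod_cast h2
      omega
  -- Step 4: quantitative estimate
  set M : ℝ := ((p * ℓ + q * ℓ : ℕ) : ℝ) * (2 * K) with hMdef
  have hmain : ∀ n : ℕ, ‖(∑ i ∈ Finset.range n, Ei n i) - (n:ℂ) * L‖ ≤ M := by
    intro n
    have h1 : (∑ i ∈ Finset.range n, Ei n i) - (n:ℂ) * L
        = ∑ i ∈ Finset.range n, (Ei n i - L) := by
      rw [Finset.sum_sub_distrib, Finset.sum_const, Finset.card_range, nsmul_eq_mul]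
    rw [h1]
    calc ‖∑ i ∈ Finset.range n, (Ei n i - L)‖
        ≤ ∑ i ∈ Finset.range n, ‖Ei n i - L‖ := norm_sum_le _ _
      _ ≤ ∑ i ∈ Finset.range n,
            (if p * ℓ ≤ i ∧ i + q * ℓ + 1 ≤ n then 0 else 2 * K) := by
          refine Finset.sum_le_sum fun i _ => ?_
          by_cases hcase : p * ℓ ≤ i ∧ i + q * ℓ + 1 ≤ n
          · rw [if_pos hcase, hint n i hcase.1 hcase.2, sub_self, norm_zero]
          · rw [if_neg hcase]
            calc ‖Ei n i - L‖ ≤ ‖Ei n i‖ + ‖L‖ := norm_sub_le _ _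
              _ ≤ K + K := add_le_add (hEK n i) hLK
              _ = 2 * K := by ring
      _ ≤ M := by
          have hswap : ∀ i : ℕ, (if p * ℓ ≤ i ∧ i + q * ℓ + 1 ≤ n then (0:ℝ) else 2 * K)
              = (if ¬(p * ℓ ≤ i ∧ i + q * ℓ + 1 ≤ n) then 2 * K else 0) := by
            intro i
            by_cases hc : p * ℓ ≤ i ∧ i + q * ℓ + 1 ≤ n
            · rw [if_pos hc, if_neg (not_not_intro hc)]
            · rw [if_neg hc, if_pos hc]
          simp only [hswap]
          rw [← Finset.sum_filter]
          have hcard : ((Finset.range n).filter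
              fun i => ¬(p * ℓ ≤ i ∧ i + q * ℓ + 1 ≤ n)).card ≤ p * ℓ + q * ℓ := by
            calc ((Finset.range n).filter
                  fun i => ¬(p * ℓ ≤ i ∧ i + q * ℓ + 1 ≤ n)).card
                ≤ ((Finset.range (p * ℓ)) ∪ (Finset.Ico (n - q * ℓ) n)).card := by
                  refine Finset.card_le_card ?_
                  intro x hx
                  simp only [Finset.mem_filter, Finset.mem_range] at hx
                  simp only [Finset.mem_union, Finset.mem_range, Finset.mem_Ico]
                  omega
              _ ≤ (Finset.range (p * ℓ)).card + (Finset.Ico (n - q * ℓ) n).card :=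
                  Finset.card_union_le _ _
              _ ≤ p * ℓ + q * ℓ := by
                  rw [Finset.card_range, Nat.card_Ico]
                  omega
          rw [Finset.sum_const, nsmul_eq_mul, hMdef]
          refine mul_le_mul_of_nonneg_right ?_ (by positivity)
          exact_mod_cast hcard
  -- Step 5: conclusion
  rw [← tendsto_sub_nhds_zero_iff]
  refine squeeze_zero_norm' ?_ (tendsto_const_div_atTop_nhds_zero_nat M)
  filter_upwards [Filter.eventually_ge_atTop 1] with n hn
  have hne : (n:ℂ) ≠ 0 := by
    exact_mod_cast Nat.cast_ne_zero.mpr (by omega)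
  rw [htrace n]
  have h2 : (n:ℂ)⁻¹ * (∑ i ∈ Finset.range n, Ei n i) - L
      = (n:ℂ)⁻¹ * ((∑ i ∈ Finset.range n, Ei n i) - (n:ℂ) * L) := by
    field_simp
  rw [h2, norm_mul, norm_inv]
  have hnorm : ‖(n:ℂ)‖ = (n:ℝ) := by
    simp
  rw [hnorm]
  have hnpos : (0:ℝ) < (n:ℝ) := by exact_mod_cast (by omega : 0 < n)
  rw [div_eq_inv_mul]
  exact mul_le_mul_of_nonneg_left (hmain n) (by positivity)
end
end
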